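/- arXiv:1002.0539 — 13 statements merged into one kernel-verified Lean document; each statement's English description precedes it below -/
import Mathlib

section
/- Let D be a Gauss diagram on the Wilson line containing two distinct arrows i and j with σ(i) = −σ(j), such that the head of i and the head of j are adjacent endpoints of D and the tail of i and the tail of j are adjacent endpoints of D (the configuration of the second Reidemeister move). Then I_D(i) = −I_D(j), and if D' denotes the Gauss diagram obtained from D by deleting both arrows i and j, then I_{D'}(x) = I_D(x) for every arrow x of D with x ∉ {i, j}. -/
noncomputable section

namespace Gauss

attribute [local instance] Classical.propDecidable

/-- An arrow of a Gauss diagram on the Wilson line: a tail point, a head point,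
and a sign. -/
structure Arrow where
  t : ℝ
  h : ℝ
  sgn : ℤ

/-- `p` lies strictly between `a` and `b`. -/
def Between (a b p : ℝ) : Prop := (a < p ∧ p < b) ∨ (b < p ∧ p < a)

/-- Two arrows are linked if they are distinct and exactly one of the two
endpoints of `y` lies strictly between the two endpoints of `x`. -/
def Linked (x y : Arrow) : Prop :=
  x ≠ y ∧ Xor' (Between x.t x.h y.t) (Between x.t x.h y.h)

/-- `delta x y = 1` if the head of `y` lies strictly between the endpoints of `x`,
and `-1` otherwise. -/
def delta (x y : Arrow) : ℤ := if Between x.t x.h y.h then 1 else -1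

/-- The index `I_D(x)` of an arrow `x` in the diagram `D`. -/
def index (D : Finset Arrow) (x : Arrow) : ℤ :=
  ∑ y ∈ D.filter (fun y => Linked x y), delta x y * x.sgn * y.sgn

/-- `p` is an endpoint of the diagram `D`. -/
def IsEndpoint (D : Finset Arrow) (p : ℝ) : Prop :=
  ∃ a ∈ D, p = a.t ∨ p = a.h

/-- A finite set of arrows is a Gauss diagram on the Wilson line if every sign
is `±1` and all endpoints are pairwise distinct. -/
def IsGaussDiagram (D : Finset Arrow) : Prop :=
  (∀ a ∈ D, a.sgn = 1 ∨ a.sgn = -1) ∧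
  (∀ a ∈ D, a.t ≠ a.h) ∧
  (∀ a ∈ D, ∀ b ∈ D, a ≠ b → a.t ≠ b.t ∧ a.t ≠ b.h ∧ a.h ≠ b.t ∧ a.h ≠ b.h)

/-- Two endpoints of `D` are adjacent if no endpoint of `D` lies strictly
between them. -/
def Adjacent (D : Finset Arrow) (p q : ℝ) : Prop :=
  p ≠ q ∧ IsEndpoint D p ∧ IsEndpoint D q ∧ ∀ r, IsEndpoint D r → ¬ Between p q r

/-- The degree of an arrow in the intersection graph of `D`: the number of
arrows linked with it. -/
def degree (D : Finset Arrow) (x : Arrow) : ℕ :=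
  (D.filter (fun y => Linked x y)).card

/-- A pair of arrows is heads-in if the head of each lies strictly between the
endpoints of the other. -/
def HeadsIn (x y : Arrow) : Prop :=
  Between x.t x.h y.h ∧ Between y.t y.h x.h

/-- A pair of arrows is heads-out if the head of neither lies strictly between
the endpoints of the other. -/
def HeadsOut (x y : Arrow) : Prop :=
  ¬ Between x.t x.h y.h ∧ ¬ Between y.t y.h x.h

/-- The order-two invariant counting heads-out linked pairs, weighted by signs.
Each unordered pair is counted once, via the ordering of the tails. -/
def v21 (D : Finset Arrow) : ℤ :=
  ∑ p ∈ (D ×ˢ D).filter (fun p => p.1.t < p.2.t ∧ Linked p.1 p.2 ∧ HeadsOut p.1 p.2),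
    p.1.sgn * p.2.sgn

/-- The order-two invariant counting heads-in linked pairs, weighted by signs.
Each unordered pair is counted once, via the ordering of the tails. -/
def v22 (D : Finset Arrow) : ℤ :=
  ∑ p ∈ (D ×ˢ D).filter (fun p => p.1.t < p.2.t ∧ Linked p.1 p.2 ∧ HeadsIn p.1 p.2),
    p.1.sgn * p.2.sgn

lemma between_comm {a b p : ℝ} : Between a b p ↔ Between b a p := or_comm

lemma lemA {a b p q : ℝ} (h : Between a b p) (hq : ¬ Between a b q)
    (hqa : q ≠ a) (hqb : q ≠ b) : Between p q a ∨ Between p q b := by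
  rcases h with ⟨h1, h2⟩ | ⟨h1, h2⟩
  · have hd : q < a ∨ b < q := by
      by_contra hcon
      push_neg at hcon
      exact hq (Or.inl ⟨lt_of_le_of_ne hcon.1 (Ne.symm hqa), lt_of_le_of_ne hcon.2 hqb⟩)
    rcases hd with hd | hd
    · exact Or.inl (Or.inr ⟨hd, h1⟩)
    · exact Or.inr (Or.inl ⟨h2, hd⟩)
  · have hd : q < b ∨ a < q := by
      by_contra hcon
      push_neg at hcon
      exact hq (Or.inr ⟨lt_of_le_of_ne hcon.1 (Ne.symm hqb), lt_of_le_of_ne hcon.2 hqa⟩)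
    rcases hd with hd | hd
    · exact Or.inr (Or.inr ⟨hd, h1⟩)
    · exact Or.inl (Or.inl ⟨h2, hd⟩)

lemma lemB {a b c d p : ℝ} (h : Between a b p) (hq : ¬ Between c d p)
    (hpc : p ≠ c) (hpd : p ≠ d) : Between a c p ∨ Between b d p := by
  rcases h with ⟨h1, h2⟩ | ⟨h1, h2⟩
  · rcases lt_trichotomy p c with hc | hc | hc
    · rcases lt_trichotomy p d with hd | hd | hd
      · exact Or.inl (Or.inl ⟨h1, hc⟩)
      · exact absurd hd hpd
      · exact absurd (Or.inr ⟨hd, hc⟩) hq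
    · exact absurd hc hpc
    · rcases lt_trichotomy p d with hd | hd | hd
      · exact absurd (Or.inl ⟨hc, hd⟩) hq
      · exact absurd hd hpd
      · exact Or.inr (Or.inr ⟨hd, h2⟩)
  · rcases lt_trichotomy p c with hc | hc | hc
    · rcases lt_trichotomy p d with hd | hd | hd
      · exact Or.inr (Or.inl ⟨h1, hd⟩)
      · exact absurd hd hpd
      · exact absurd (Or.inr ⟨hd, hc⟩) hq
    · exact absurd hc hpc
    · rcases lt_trichotomy p d with hd | hd | hd
      · exact absurd (Or.inl ⟨hc, hd⟩) hq
      · exact absurd hd hpd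
      · exact Or.inl (Or.inr ⟨hc, h2⟩)

lemma lemD {a b c d : ℝ} (h1 : Between a b c) (h2 : Between c d a) : Between b d c := by
  rcases h1 with ⟨x1, x2⟩ | ⟨x1, x2⟩ <;> rcases h2 with ⟨y1, y2⟩ | ⟨y1, y2⟩
  · exact absurd y1 (not_lt.mpr x1.le)
  · exact Or.inr ⟨by linarith, x2⟩
  · exact Or.inl ⟨x1, by linarith⟩
  · exact absurd x2 (not_lt.mpr y2.le)

lemma adjacent_symm {D : Finset Arrow} {p q : ℝ} (h : Adjacent D p q) : Adjacent D q p :=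
  ⟨h.1.symm, h.2.2.1, h.2.1, fun r hr hb => h.2.2.2 r hr (between_comm.mp hb)⟩

/-- Two adjacent points of `D` lie on the same side of any interval spanned by
endpoints of `D`. -/
lemma adjTransfer {D : Finset Arrow} {p q : ℝ} (hadj : Adjacent D p q) {a b : ℝ}
    (ha : IsEndpoint D a) (hb : IsEndpoint D b)
    (hpa : p ≠ a) (hpb : p ≠ b) (hqa : q ≠ a) (hqb : q ≠ b) :
    Between a b p ↔ Between a b q := by
  constructor
  · intro h
    by_contra hn
    rcases lemA h hn hqa hqb with hc | hc
    · exact hadj.2.2.2 a ha hc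
    · exact hadj.2.2.2 b hb hc
  · intro h
    by_contra hn
    rcases lemA h hn hpa hpb with hc | hc
    · exact hadj.2.2.2 a ha (between_comm.mp hc)
    · exact hadj.2.2.2 b hb (between_comm.mp hc)

/-- In the R2 configuration, an endpoint of `D` distinct from the endpoints of
`i`, `j` lies in the interval of `i` iff it lies in the interval of `j`. -/
lemma transfer1 {D : Finset Arrow} {i j : Arrow}
    (hheads : Adjacent D i.h j.h) (htails : Adjacent D i.t j.t)
    {p : ℝ} (hp : IsEndpoint D p)
    (h1 : p ≠ i.t) (h2 : p ≠ i.h) (h3 : p ≠ j.t) (h4 : p ≠ j.h) :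
    Between i.t i.h p ↔ Between j.t j.h p := by
  constructor
  · intro h
    by_contra hn
    rcases lemB h hn h3 h4 with hc | hc
    · exact htails.2.2.2 p hp hc
    · exact hheads.2.2.2 p hp hc
  · intro h
    by_contra hn
    rcases lemB h hn h1 h2 with hc | hc
    · exact htails.2.2.2 p hp (between_comm.mp hc)
    · exact hheads.2.2.2 p hp (between_comm.mp hc)

/-- The summand of the index, as a total function. -/
def term (x y : Arrow) : ℤ := if Linked x y then delta x y * x.sgn * y.sgn else 0

lemma index_eq_sum (D : Finset Arrow) (x : Arrow) :
    index D x = ∑ y ∈ D, term x y := by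
  unfold index term
  rw [Finset.sum_filter]

lemma term_self (x : Arrow) : term x x = 0 := by
  unfold term
  rw [if_neg]
  intro h
  exact h.1 rfl

/-- If `i` and `j` are in the R2 configuration and linked, then `j` is linked to
`i` and their deltas are opposite. -/
lemma linkCross {D : Finset Arrow} (hD : IsGaussDiagram D) {i j : Arrow}
    (hi : i ∈ D) (hj : j ∈ D) (hij : i ≠ j)
    (hheads : Adjacent D i.h j.h) (htails : Adjacent D i.t j.t)
    (hL : Linked i j) :
    Linked j i ∧ (Between j.t j.h i.h ↔ ¬ Between i.t i.h j.h) := by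
  obtain ⟨d1, d2, d3, d4⟩ := hD.2.2 i hi j hj hij
  have ejt : IsEndpoint D j.t := ⟨j, hj, Or.inl rfl⟩
  have ejh : IsEndpoint D j.h := ⟨j, hj, Or.inr rfl⟩
  obtain ⟨-, hx⟩ := hL
  unfold Xor' at hx
  rcases hx with ⟨hA, hnB⟩ | ⟨hB, hnA⟩
  · have hni : ¬ Between j.t j.h i.t := fun hc => hheads.2.2.2 j.t ejt (lemD hA hc)
    have hih : Between j.t j.h i.h := by
      rcases lemA hA hnB (Ne.symm d2) (Ne.symm d4) with hc | hc
      · exact absurd hc hni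
      · exact hc
    exact ⟨⟨hij.symm, Or.inr ⟨hih, hni⟩⟩, iff_of_true hih hnB⟩
  · have hnih : ¬ Between j.t j.h i.h := fun hc =>
      htails.2.2.2 j.h ejh (lemD (between_comm.mp hB) (between_comm.mp hc))
    have hit : Between j.t j.h i.t := by
      rcases lemA hB hnA (Ne.symm d1) (Ne.symm d3) with hc | hc
      · exact between_comm.mp hc
      · exact absurd (between_comm.mp hc) hnih
    exact ⟨⟨hij.symm, Or.inl ⟨hit, hnih⟩⟩, iff_of_false hnih (not_not_intro hB)⟩

/-- in the configuration of the second Reidemeister move,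
`I_D(i) = -I_D(j)`, and deleting both arrows does not change the index of any
other arrow. -/
theorem stmt1 (D : Finset Arrow) (hD : IsGaussDiagram D) (i j : Arrow)
    (hi : i ∈ D) (hj : j ∈ D) (hij : i ≠ j) (hsgn : i.sgn = -j.sgn)
    (hheads : Adjacent D i.h j.h) (htails : Adjacent D i.t j.t) :
    index D i = -index D j ∧
      ∀ x ∈ D, x ≠ i → x ≠ j → index ((D.erase i).erase j) x = index D x := by
  obtain ⟨d1, d2, d3, d4⟩ := hD.2.2 i hi j hj hij
  constructor
  · -- Part 1
    have hg0 : ∀ y ∈ D, y ≠ i → y ≠ j → term i y + term j y = 0 := by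
      intro y hy hyi hyj
      obtain ⟨e1, e2, e3, e4⟩ := hD.2.2 y hy i hi hyi
      obtain ⟨f1, f2, f3, f4⟩ := hD.2.2 y hy j hj hyj
      have eyt : IsEndpoint D y.t := ⟨y, hy, Or.inl rfl⟩
      have eyh : IsEndpoint D y.h := ⟨y, hy, Or.inr rfl⟩
      have ht : Between i.t i.h y.t ↔ Between j.t j.h y.t :=
        transfer1 hheads htails eyt e1 e2 f1 f2
      have hh : Between i.t i.h y.h ↔ Between j.t j.h y.h :=
        transfer1 hheads htails eyh e3 e4 f3 f4
      have hLiff : Linked i y ↔ Linked j y := by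
        constructor
        · rintro ⟨-, hx⟩
          exact ⟨Ne.symm hyj, by rwa [ht, hh] at hx⟩
        · rintro ⟨-, hx⟩
          exact ⟨Ne.symm hyi, by rwa [← ht, ← hh] at hx⟩
      unfold term
      by_cases hL : Linked i y
      · rw [if_pos hL, if_pos (hLiff.mp hL)]
        unfold delta
        by_cases hc : Between i.t i.h y.h
        · rw [if_pos hc, if_pos (hh.mp hc), hsgn]; ring
        · rw [if_neg hc, if_neg (fun h => hc (hh.mpr h)), hsgn]; ring
      · rw [if_neg hL, if_neg (fun h => hL (hLiff.mpr h))]; ring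
    have hcross : term i j + term j i = 0 := by
      by_cases hL : Linked i j
      · obtain ⟨hL', hdel⟩ := linkCross hD hi hj hij hheads htails hL
        unfold term delta
        rw [if_pos hL, if_pos hL']
        by_cases hb : Between i.t i.h j.h
        · rw [if_pos hb, if_neg (fun h => (hdel.mp h) hb)]; ring
        · rw [if_neg hb, if_pos (hdel.mpr hb)]; ring
      · have hL2 : ¬ Linked j i := fun h =>
          hL (linkCross hD hj hi hij.symm (adjacent_symm hheads) (adjacent_symm htails) h).1
        unfold term
        rw [if_neg hL, if_neg hL2]; ring
    have hsum : index D i + index D j = 0 := by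
      rw [index_eq_sum, index_eq_sum, ← Finset.sum_add_distrib]
      have hsub : ({i, j} : Finset Arrow) ⊆ D := by
        intro y hy
        rcases Finset.mem_insert.mp hy with h | h
        · exact h ▸ hi
        · exact (Finset.mem_singleton.mp h) ▸ hj
      have : ∑ y ∈ D, (term i y + term j y) =
          ∑ y ∈ ({i, j} : Finset Arrow), (term i y + term j y) := by
        refine (Finset.sum_subset hsub ?_).symm
        intro y hy hyn
        have hyi : y ≠ i := fun h => hyn (by simp [h])
        have hyj : y ≠ j := fun h => hyn (by simp [h])
        exact hg0 y hy hyi hyj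
      rw [this, Finset.sum_pair hij, term_self, term_self]
      linarith [hcross]
    linarith [hsum]
  · -- Part 2
    intro x hx hxi hxj
    obtain ⟨e1, e2, e3, e4⟩ := hD.2.2 i hi x hx (fun h => hxi h.symm)
    obtain ⟨f1, f2, f3, f4⟩ := hD.2.2 j hj x hx (fun h => hxj h.symm)
    have ext' : IsEndpoint D x.t := ⟨x, hx, Or.inl rfl⟩
    have exh : IsEndpoint D x.h := ⟨x, hx, Or.inr rfl⟩
    have hh : Between x.t x.h i.h ↔ Between x.t x.h j.h :=
      adjTransfer hheads ext' exh e3 e4 f3 f4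
    have ht : Between x.t x.h i.t ↔ Between x.t x.h j.t :=
      adjTransfer htails ext' exh e1 e2 f1 f2
    have hLiff : Linked x i ↔ Linked x j := by
      constructor
      · rintro ⟨-, hz⟩
        exact ⟨hxj, by rwa [ht, hh] at hz⟩
      · rintro ⟨-, hz⟩
        exact ⟨hxi, by rwa [← ht, ← hh] at hz⟩
    have hterm : term x i + term x j = 0 := by
      unfold term
      by_cases hL : Linked x i
      · rw [if_pos hL, if_pos (hLiff.mp hL)]
        unfold delta
        by_cases hc : Between x.t x.h i.h
        · rw [if_pos hc, if_pos (hh.mp hc), hsgn]; ring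
        · rw [if_neg hc, if_neg (fun h => hc (hh.mpr h)), hsgn]; ring
      · rw [if_neg hL, if_neg (fun h => hL (hLiff.mpr h))]; ring
    have hjmem : j ∈ D.erase i := Finset.mem_erase.mpr ⟨hij.symm, hj⟩
    have h1 : (∑ y ∈ D.erase i, term x y) + term x i = ∑ y ∈ D, term x y :=
      Finset.sum_erase_add D _ hi
    have h2 : (∑ y ∈ (D.erase i).erase j, term x y) + term x j =
        ∑ y ∈ D.erase i, term x y :=
      Finset.sum_erase_add _ _ hjmem
    rw [index_eq_sum, index_eq_sum]
    linarith [h1, h2, hterm]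

end Gauss
end
end

section
/- Let D be a Gauss diagram on the Wilson line containing two distinct arrows i and j such that the head of i and the head of j are adjacent endpoints of D and the tail of i and the tail of j are adjacent endpoints of D. Then every arrow x of D with x ∉ {i, j} is linked with i if and only if it is linked with j; consequently deg_D(i) ≡ deg_D(j) (mod 2). (This is the verification of the second-Reidemeister-move axiom for the Gaussian parity, in which an arrow is even or odd according to the parity of its degree in the intersection graph.) -/
noncomputable section

namespace Gauss

attribute [local instance] Classical.propDecidable

lemma between_iff (a b r : ℝ) (ha : r ≠ a) (hb : r ≠ b) :
    Between a b r ↔ Xor' (a < r) (b < r) := by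
  constructor
  · rintro (⟨u, v⟩ | ⟨u, v⟩)
    · exact Or.inl ⟨u, not_lt.mpr v.le⟩
    · exact Or.inr ⟨u, not_lt.mpr v.le⟩
  · rintro (⟨u, v⟩ | ⟨u, v⟩)
    · exact Or.inl ⟨u, lt_of_le_of_ne (not_lt.mp v) hb⟩
    · exact Or.inr ⟨u, lt_of_le_of_ne (not_lt.mp v) ha⟩

lemma not_between (p q r : ℝ) (h : ¬ Between p q r) (h1 : r ≠ p) (h2 : r ≠ q) :
    (p < r ↔ q < r) := by
  constructor
  · intro hp
    by_contra hq
    exact h (Or.inl ⟨hp, lt_of_le_of_ne (not_lt.mp hq) h2⟩)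
  · intro hq
    by_contra hp
    exact h (Or.inr ⟨hq, lt_of_le_of_ne (not_lt.mp hp) h1⟩)

lemma xor_swap (p q r s : Prop) :
    Xor' (Xor' p r) (Xor' q s) ↔ Xor' (Xor' (¬p) (¬q)) (Xor' (¬r) (¬s)) := by
  unfold Xor' Xor; tauto

lemma lt_symm_iff (a b : ℝ) (h : a ≠ b) : b < a ↔ ¬ a < b :=
  ⟨fun hh => not_lt.mpr hh.le, fun hh => lt_of_le_of_ne (not_lt.mp hh) h.symm⟩

/-- in the configuration of the second Reidemeister move, every
other arrow is linked with `i` iff it is linked with `j`; consequently the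
degrees of `i` and `j` in the intersection graph agree mod 2. -/
theorem stmt3 (D : Finset Arrow) (hD : IsGaussDiagram D) (i j : Arrow)
    (hi : i ∈ D) (hj : j ∈ D) (hij : i ≠ j)
    (hheads : Adjacent D i.h j.h) (htails : Adjacent D i.t j.t) :
    (∀ x ∈ D, x ≠ i → x ≠ j → (Linked i x ↔ Linked j x)) ∧
    degree D i % 2 = degree D j % 2 := by
  obtain ⟨_, hne, hdist⟩ := hD
  obtain ⟨f1, f2, f3, f4⟩ := hdist i hi j hj hij
  have key : ∀ x ∈ D, x ≠ i → x ≠ j → (Linked i x ↔ Linked j x) := by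
    intro x hx hxi hxj
    obtain ⟨d1, d2, d3, d4⟩ := hdist x hx i hi hxi
    obtain ⟨e1, e2, e3, e4⟩ := hdist x hx j hj hxj
    have ept : IsEndpoint D x.t := ⟨x, hx, Or.inl rfl⟩
    have eph : IsEndpoint D x.h := ⟨x, hx, Or.inr rfl⟩
    have t1 : (i.t < x.t ↔ j.t < x.t) := not_between _ _ _ (htails.2.2.2 x.t ept) d1 e1
    have t2 : (i.h < x.t ↔ j.h < x.t) := not_between _ _ _ (hheads.2.2.2 x.t ept) d2 e2
    have t3 : (i.t < x.h ↔ j.t < x.h) := not_between _ _ _ (htails.2.2.2 x.h eph) d3 e3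
    have t4 : (i.h < x.h ↔ j.h < x.h) := not_between _ _ _ (hheads.2.2.2 x.h eph) d4 e4
    have b1 : Between i.t i.h x.t ↔ Between j.t j.h x.t := by
      rw [between_iff _ _ _ d1 d2, between_iff _ _ _ e1 e2, t1, t2]
    have b2 : Between i.t i.h x.h ↔ Between j.t j.h x.h := by
      rw [between_iff _ _ _ d3 d4, between_iff _ _ _ e3 e4, t3, t4]
    unfold Linked
    rw [b1, b2]
    simp [Ne.symm hxi, Ne.symm hxj]
  have symm : Linked i j ↔ Linked j i := by
    unfold Linked
    rw [between_iff i.t i.h j.t f1.symm f3.symm,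
        between_iff i.t i.h j.h f2.symm f4.symm,
        between_iff j.t j.h i.t f1 f2,
        between_iff j.t j.h i.h f3 f4]
    rw [lt_symm_iff i.t j.t f1, lt_symm_iff i.t j.h f2,
        lt_symm_iff i.h j.t f3, lt_symm_iff i.h j.h f4]
    simp only [hij, Ne.symm hij, ne_eq, not_false_eq_true, true_and]
    exact xor_swap _ _ _ _
  have deg : degree D i = degree D j := by
    unfold degree
    rw [Finset.card_filter, Finset.card_filter]
    have hji : j ∈ D.erase i := Finset.mem_erase.mpr ⟨Ne.symm hij, hj⟩
    rw [← Finset.sum_erase_add D (fun y => if Linked i y then 1 else 0) hi,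
        ← Finset.sum_erase_add (D.erase i) (fun y => if Linked i y then 1 else 0) hji,
        ← Finset.sum_erase_add D (fun y => if Linked j y then 1 else 0) hi,
        ← Finset.sum_erase_add (D.erase i) (fun y => if Linked j y then 1 else 0) hji]
    have hsum : ∑ y ∈ (D.erase i).erase j, (if Linked i y then 1 else 0) =
        ∑ y ∈ (D.erase i).erase j, (if Linked j y then 1 else 0) := by
      refine Finset.sum_congr rfl fun y hy => ?_
      obtain ⟨hyj, hy'⟩ := Finset.mem_erase.mp hy
      obtain ⟨hyi, hyD⟩ := Finset.mem_erase.mp hy'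
      rw [key y hyD hyi hyj]
    have hii : (if Linked i i then 1 else 0) = 0 := by simp [Linked]
    have hjj : (if Linked j j then 1 else 0) = 0 := by simp [Linked]
    have hijji : (if Linked i j then 1 else 0) = (if Linked j i then 1 else 0) := by
      rw [symm]
    simp only [hsum, hii, hjj, hijji]
    omega
  exact ⟨key, by rw [deg]⟩

end Gauss
end
end

section
/- Let D be a Gauss diagram on the Wilson line containing three pairwise linked arrows i, j, k whose six endpoints, listed in increasing order as q1 < q2 < q3 < q4 < q5 < q6, form three pairs of adjacent endpoints of D: q1 is adjacent to q2, q3 is adjacent to q4, and q5 is adjacent to q6 (the configuration of the third Reidemeister move). Then every arrow x of D with x ∉ {i, j, k} is linked with an even number of the arrows i, j, k; consequently deg_D(i) + deg_D(j) + deg_D(k) is even. (This is the verification of the third-Reidemeister-move axiom (3a) for the Gaussian parity.) -/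
noncomputable section

namespace Gauss

attribute [local instance] Classical.propDecidable

lemma between_iff_s4 (a b p : ℝ) : Between a b p ↔ min a b < p ∧ p < max a b := by
  rcases le_total a b with h|h
  · rw [min_eq_left h, max_eq_right h]
    constructor
    · rintro (⟨h1,h2⟩|⟨h1,h2⟩)
      · exact ⟨h1,h2⟩
      · exact ⟨by linarith, by linarith⟩
    · exact fun h' => Or.inl h'
  · rw [min_eq_right h, max_eq_left h]
    constructor
    · rintro (⟨h1,h2⟩|⟨h1,h2⟩)
      · exact ⟨by linarith, by linarith⟩
      · exact ⟨h1,h2⟩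
    · exact fun h' => Or.inr h'

lemma outside {q1 q2 r : ℝ} (h12 : q1 < q2) (h1 : r ≠ q1) (h2 : r ≠ q2)
    (hnb : ¬ Between q1 q2 r) : r < q1 ∨ q2 < r := by
  unfold Between at hnb
  push_neg at hnb
  rcases lt_trichotomy r q1 with h|h|h
  · exact Or.inl h
  · exact absurd h h1
  · right
    rcases lt_trichotomy r q2 with h'|h'|h'
    · exact absurd (hnb.1 h) (not_le.mpr h')
    · exact absurd h' h2
    · exact h'

lemma between_congr {a b q1 q2 : ℝ} (h12 : q1 < q2)
    (ha : a < q1 ∨ q2 < a) (hb : b < q1 ∨ q2 < b) :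
    (Between a b q1 ↔ Between a b q2) := by
  unfold Between
  rcases ha with ha|ha <;> rcases hb with hb|hb <;>
    constructor <;> rintro (⟨h1,h2⟩|⟨h1,h2⟩) <;>
    first
      | (left; constructor <;> linarith)
      | (right; constructor <;> linarith)
      | linarith

lemma cross_mp {s e u v : ℝ} (hse : s < e) (huv : u < v)
    (d1 : s ≠ u) (d4 : e ≠ v) :
    Xor' (s < u ∧ u < e) (s < v ∧ v < e) → Xor' (u < s ∧ s < v) (u < e ∧ e < v) := by
  rintro (⟨⟨a1,a2⟩,hn⟩|⟨⟨a1,a2⟩,hn⟩) <;> push_neg at hn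
  · right
    have hev : e ≤ v := hn (by linarith)
    have : e < v := lt_of_le_of_ne hev d4
    exact ⟨⟨a2, this⟩, by push_neg; intro h; linarith⟩
  · left
    have hus : ¬ (s < u) := fun h => absurd (hn h) (not_le.mpr (by linarith))
    have : u < s := lt_of_le_of_ne (not_lt.mp hus) d1.symm
    exact ⟨⟨this, a1⟩, by push_neg; intro h; linarith⟩

lemma cross_symm {s e u v : ℝ} (hse : s < e) (huv : u < v)
    (d1 : s ≠ u) (d4 : e ≠ v) :
    (Xor' (s < u ∧ u < e) (s < v ∧ v < e) ↔ Xor' (u < s ∧ s < v) (u < e ∧ e < v)) :=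
  ⟨cross_mp hse huv d1 d4, cross_mp huv hse d1.symm d4.symm⟩

lemma xor_pair (P : ℝ → Prop) (x y : ℝ) :
    Xor' (P (min x y)) (P (max x y)) ↔ Xor' (P x) (P y) := by
  rcases le_total x y with h|h <;>
    simp [min_eq_left, min_eq_right, max_eq_left, max_eq_right, h, xor_comm] <;>
    exact (xor_comm (P y) (P x)).to_iff

lemma linked_symm (a b : Arrow) (hta : a.t ≠ a.h) (htb : b.t ≠ b.h)
    (h1 : a.t ≠ b.t) (h2 : a.t ≠ b.h) (h3 : a.h ≠ b.t) (h4 : a.h ≠ b.h) :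
    (Linked a b ↔ Linked b a) := by
  have hab : a ≠ b := fun h => h1 (by rw [h])
  have dmin : min a.t a.h ≠ min b.t b.h := by
    rcases min_choice a.t a.h with h|h <;> rcases min_choice b.t b.h with h'|h' <;>
      rw [h, h'] <;> assumption
  have dmax : max a.t a.h ≠ max b.t b.h := by
    rcases max_choice a.t a.h with h|h <;> rcases max_choice b.t b.h with h'|h' <;>
      rw [h, h'] <;> assumption
  unfold Linked
  rw [and_iff_right hab, and_iff_right (Ne.symm hab)]
  simp only [between_iff_s4]
  rw [← xor_pair (fun p => min a.t a.h < p ∧ p < max a.t a.h) b.t b.h,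
      ← xor_pair (fun p => min b.t b.h < p ∧ p < max b.t b.h) a.t a.h]
  exact cross_symm (min_lt_max.mpr hta) (min_lt_max.mpr htb) dmin dmax

lemma sum6 (g : ℝ → ℕ) {a b c d e f : ℝ}
    (hab : a≠b) (hac : a≠c) (had : a≠d) (hae : a≠e) (haf : a≠f)
    (hbc : b≠c) (hbd : b≠d) (hbe : b≠e) (hbf : b≠f)
    (hcd : c≠d) (hce : c≠e) (hcf : c≠f)
    (hde : d≠e) (hdf : d≠f) (hef : e≠f) :
    ∑ r ∈ ({a,b,c,d,e,f} : Finset ℝ), g r = g a + g b + g c + g d + g e + g f := by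
  rw [Finset.sum_insert (by simp [hab,hac,had,hae,haf]),
      Finset.sum_insert (by simp [hbc,hbd,hbe,hbf]),
      Finset.sum_insert (by simp [hcd,hce,hcf]),
      Finset.sum_insert (by simp [hde,hdf]),
      Finset.sum_insert (by simp [hef]),
      Finset.sum_singleton]
  ring


/-- in the configuration of the third Reidemeister move, every
other arrow is linked with an even number of the three arrows `i, j, k`;
consequently the sum of their degrees is even. -/
theorem stmt4 (D : Finset Arrow) (hD : IsGaussDiagram D) (i j k : Arrow)
    (hi : i ∈ D) (hj : j ∈ D) (hk : k ∈ D)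
    (hij : Linked i j) (hik : Linked i k) (hjk : Linked j k)
    (q1 q2 q3 q4 q5 q6 : ℝ)
    (hq12 : q1 < q2) (hq23 : q2 < q3) (hq34 : q3 < q4) (hq45 : q4 < q5)
    (hq56 : q5 < q6)
    (hset : ({q1, q2, q3, q4, q5, q6} : Set ℝ) = {i.t, i.h, j.t, j.h, k.t, k.h})
    (h12 : Adjacent D q1 q2) (h34 : Adjacent D q3 q4) (h56 : Adjacent D q5 q6) :
    (∀ x ∈ D, x ≠ i → x ≠ j → x ≠ k →
      Even ( (({i, j, k} : Finset Arrow).filter (fun a => Linked x a)).card )) ∧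
    Even (degree D i + degree D j + degree D k) := by
  obtain ⟨hsgn, hDt, hDd⟩ := hD
  have hij' : i ≠ j := hij.1
  have hik' : i ≠ k := hik.1
  have hjk' : j ≠ k := hjk.1
  obtain ⟨dij1, dij2, dij3, dij4⟩ := hDd i hi j hj hij'
  obtain ⟨dik1, dik2, dik3, dik4⟩ := hDd i hi k hk hik'
  obtain ⟨djk1, djk2, djk3, djk4⟩ := hDd j hj k hk hjk'
  have hti := hDt i hi
  have htj := hDt j hj
  have htk := hDt k hk
  have hFS : ({q1,q2,q3,q4,q5,q6} : Finset ℝ) = ({i.t,i.h,j.t,j.h,k.t,k.h} : Finset ℝ) :=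
    Finset.coe_injective (by simpa using hset)
  have memq : ∀ r ∈ ({q1,q2,q3,q4,q5,q6} : Finset ℝ),
      r = i.t ∨ r = i.h ∨ r = j.t ∨ r = j.h ∨ r = k.t ∨ r = k.h := by
    intro r hr
    have : r ∈ ({i.t,i.h,j.t,j.h,k.t,k.h} : Finset ℝ) := hFS ▸ hr
    simpa using this
  have hq1 := memq q1 (by simp)
  have hq2 := memq q2 (by simp)
  have hq3 := memq q3 (by simp)
  have hq4 := memq q4 (by simp)
  have hq5 := memq q5 (by simp)
  have hq6 := memq q6 (by simp)
  have hcard : ∀ x : Arrow,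
      (({i, j, k} : Finset Arrow).filter (fun a => Linked x a)).card
        = (if Linked x i then 1 else 0) + (if Linked x j then 1 else 0)
          + (if Linked x k then 1 else 0) := by
    intro x
    rw [Finset.card_filter,
        Finset.sum_insert (by simp [hij', hik']),
        Finset.sum_insert (by simp [hjk']),
        Finset.sum_singleton]
    ring
  have partA : ∀ x ∈ D, x ≠ i → x ≠ j → x ≠ k →
      Even ((({i, j, k} : Finset Arrow).filter (fun a => Linked x a)).card) := by
    intro x hx hxi hxj hxk
    obtain ⟨exi1, exi2, exi3, exi4⟩ := hDd x hx i hi hxi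
    obtain ⟨exj1, exj2, exj3, exj4⟩ := hDd x hx j hj hxj
    obtain ⟨exk1, exk2, exk3, exk4⟩ := hDd x hx k hk hxk
    have hxt_ne : ∀ r, (r = i.t ∨ r = i.h ∨ r = j.t ∨ r = j.h ∨ r = k.t ∨ r = k.h) →
        x.t ≠ r := by
      rintro r (rfl|rfl|rfl|rfl|rfl|rfl) <;> assumption
    have hxh_ne : ∀ r, (r = i.t ∨ r = i.h ∨ r = j.t ∨ r = j.h ∨ r = k.t ∨ r = k.h) →
        x.h ≠ r := by
      rintro r (rfl|rfl|rfl|rfl|rfl|rfl) <;> assumption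
    have ep_t : IsEndpoint D x.t := ⟨x, hx, Or.inl rfl⟩
    have ep_h : IsEndpoint D x.h := ⟨x, hx, Or.inr rfl⟩
    have pt12 : x.t < q1 ∨ q2 < x.t :=
      outside hq12 (hxt_ne q1 hq1) (hxt_ne q2 hq2) (h12.2.2.2 x.t ep_t)
    have ph12 : x.h < q1 ∨ q2 < x.h :=
      outside hq12 (hxh_ne q1 hq1) (hxh_ne q2 hq2) (h12.2.2.2 x.h ep_h)
    have pt34 : x.t < q3 ∨ q4 < x.t :=
      outside hq34 (hxt_ne q3 hq3) (hxt_ne q4 hq4) (h34.2.2.2 x.t ep_t)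
    have ph34 : x.h < q3 ∨ q4 < x.h :=
      outside hq34 (hxh_ne q3 hq3) (hxh_ne q4 hq4) (h34.2.2.2 x.h ep_h)
    have pt56 : x.t < q5 ∨ q6 < x.t :=
      outside hq56 (hxt_ne q5 hq5) (hxt_ne q6 hq6) (h56.2.2.2 x.t ep_t)
    have ph56 : x.h < q5 ∨ q6 < x.h :=
      outside hq56 (hxh_ne q5 hq5) (hxh_ne q6 hq6) (h56.2.2.2 x.h ep_h)
    have c12 : Between x.t x.h q1 ↔ Between x.t x.h q2 := between_congr hq12 pt12 ph12
    have c34 : Between x.t x.h q3 ↔ Between x.t x.h q4 := between_congr hq34 pt34 ph34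
    have c56 : Between x.t x.h q5 ↔ Between x.t x.h q6 := between_congr hq56 pt56 ph56
    set g : ℝ → ℕ := fun r => if Between x.t x.h r then 1 else 0 with hg
    have Squ : ∑ r ∈ ({q1,q2,q3,q4,q5,q6} : Finset ℝ), g r
        = g q1 + g q2 + g q3 + g q4 + g q5 + g q6 :=
      sum6 g (by linarith) (by linarith) (by linarith) (by linarith) (by linarith)
        (by linarith) (by linarith) (by linarith) (by linarith) (by linarith)
        (by linarith) (by linarith) (by linarith) (by linarith) (by linarith)
    have Sep : ∑ r ∈ ({i.t,i.h,j.t,j.h,k.t,k.h} : Finset ℝ), g r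
        = g i.t + g i.h + g j.t + g j.h + g k.t + g k.h :=
      sum6 g hti dij1 dij2 dik1 dik2 dij3 dij4 dik3 dik4 htj djk1 djk2 djk3 djk4 htk
    have Esum : g i.t + g i.h + g j.t + g j.h + g k.t + g k.h
        = g q1 + g q2 + g q3 + g q4 + g q5 + g q6 := by
      rw [← Sep, ← hFS, Squ]
    have b12 : g q1 = g q2 := if_congr c12 rfl rfl
    have b34 : g q3 = g q4 := if_congr c34 rfl rfl
    have b56 : g q5 = g q6 := if_congr c56 rfl rfl
    have lif : ∀ a : Arrow, x ≠ a → ((if Linked x a then (1:ℕ) else 0)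
        = if Xor' (Between x.t x.h a.t) (Between x.t x.h a.h) then 1 else 0) := by
      intro a hxa
      exact if_congr (and_iff_right hxa) rfl rfl
    have par : ∀ P Q : Prop, (if Xor' P Q then (1:ℕ) else 0) % 2
        = ((if P then (1:ℕ) else 0) + (if Q then (1:ℕ) else 0)) % 2 := by
      intro P Q
      by_cases hP : P <;> by_cases hQ : Q <;> simp [Xor', hP, hQ]
    have e1 : (if Xor' (Between x.t x.h i.t) (Between x.t x.h i.h) then (1:ℕ) else 0) % 2
        = (g i.t + g i.h) % 2 := par _ _
    have e2 : (if Xor' (Between x.t x.h j.t) (Between x.t x.h j.h) then (1:ℕ) else 0) % 2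
        = (g j.t + g j.h) % 2 := par _ _
    have e3 : (if Xor' (Between x.t x.h k.t) (Between x.t x.h k.h) then (1:ℕ) else 0) % 2
        = (g k.t + g k.h) % 2 := par _ _
    rw [Nat.even_iff, hcard x, lif i hxi, lif j hxj, lif k hxk]
    omega
  refine ⟨partA, ?_⟩
  have symmD : ∀ y ∈ D, ∀ z ∈ D, (Linked y z ↔ Linked z y) := by
    intro y hy z hz
    by_cases h : y = z
    · subst h; exact Iff.rfl
    · obtain ⟨d1, d2, d3, d4⟩ := hDd y hy z hz h
      exact linked_symm y z (hDt y hy) (hDt z hz) d1 d2 d3 d4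
  have degi : degree D i = ∑ x ∈ D, if Linked x i then 1 else 0 := by
    rw [degree, Finset.card_filter]
    exact Finset.sum_congr rfl fun x hx => if_congr (symmD i hi x hx) rfl rfl
  have degj : degree D j = ∑ x ∈ D, if Linked x j then 1 else 0 := by
    rw [degree, Finset.card_filter]
    exact Finset.sum_congr rfl fun x hx => if_congr (symmD j hj x hx) rfl rfl
  have degk : degree D k = ∑ x ∈ D, if Linked x k then 1 else 0 := by
    rw [degree, Finset.card_filter]
    exact Finset.sum_congr rfl fun x hx => if_congr (symmD k hk x hx) rfl rfl
  rw [degi, degj, degk, ← Finset.sum_add_distrib, ← Finset.sum_add_distrib]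
  apply Finset.even_sum
  intro x hx
  by_cases hxi : x = i
  · subst hxi
    have l0 : ¬ Linked x x := fun h => h.1 rfl
    have l2 : Linked x j := hij
    have l3 : Linked x k := hik
    rw [if_neg l0, if_pos l2, if_pos l3]; decide
  by_cases hxj : x = j
  · subst hxj
    have l0 : ¬ Linked x x := fun h => h.1 rfl
    have l1 : Linked x i := (symmD i hi x hj).mp hij
    have l3 : Linked x k := hjk
    rw [if_pos l1, if_neg l0, if_pos l3]; decide
  by_cases hxk : x = k
  · subst hxk
    have l0 : ¬ Linked x x := fun h => h.1 rfl
    have l1 : Linked x i := (symmD i hi x hk).mp hik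
    have l2 : Linked x j := (symmD j hj x hk).mp hjk
    rw [if_pos l1, if_pos l2, if_neg l0]; decide
  · have h := partA x hx hxi hxj hxk
    rw [hcard x] at h
    exact h


end Gauss
end
end

section
/- Let D be a Gauss diagram on the Wilson line with zero index, let e be its smallest endpoint, belonging to the arrow z, and let 1·D be the rotated diagram obtained from D by replacing the endpoint e of z by a real number larger than all endpoints of D, keeping its role as head or tail of z and keeping all signs and all other endpoints unchanged. Then v21(1·D) = v21(D) and v22(1·D) = v22(D). -/
noncomputable section

namespace Gauss

attribute [local instance] Classical.propDecidable

lemma between_iff_of_lt {a b p : ℝ} (hab : a < b) : Between a b p ↔ a < p ∧ p < b := by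
  constructor
  · rintro (h | ⟨h1, h2⟩)
    · exact h
    · exact ⟨by linarith, by linarith⟩
  · exact Or.inl

lemma not_between_low {a b p : ℝ} (h1 : p < a) (h2 : p < b) : ¬ Between a b p := by
  rintro (⟨h, _⟩ | ⟨_, h⟩) <;> linarith

lemma not_between_high {a b p : ℝ} (h1 : a < p) (h2 : b < p) : ¬ Between a b p := by
  rintro (⟨_, h⟩ | ⟨h, _⟩) <;> linarith

lemma xor_lt_iff_between {u v c : ℝ} (huc : u ≠ c) (hvc : v ≠ c) :
    Xor' (u < c) (v < c) ↔ Between u v c := by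
  constructor
  · rintro (⟨h1, h2⟩ | ⟨h1, h2⟩)
    · exact Or.inl ⟨h1, (not_lt.mp h2).lt_of_ne hvc.symm⟩
    · exact Or.inr ⟨h1, (not_lt.mp h2).lt_of_ne huc.symm⟩
  · rintro (⟨h1, h2⟩ | ⟨h1, h2⟩)
    · exact Or.inl ⟨h1, not_lt.mpr h2.le⟩
    · exact Or.inr ⟨h1, not_lt.mpr h2.le⟩

lemma xor_gt_iff_between {u v c : ℝ} (huc : u ≠ c) (hvc : v ≠ c) :
    Xor' (c < u) (c < v) ↔ Between u v c := by
  constructor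
  · rintro (⟨h1, h2⟩ | ⟨h1, h2⟩)
    · exact Or.inr ⟨(not_lt.mp h2).lt_of_ne hvc, h1⟩
    · exact Or.inl ⟨(not_lt.mp h2).lt_of_ne huc, h1⟩
  · rintro (⟨h1, h2⟩ | ⟨h1, h2⟩)
    · exact Or.inr ⟨h2, not_lt.mpr h1.le⟩
    · exact Or.inl ⟨h2, not_lt.mpr h1.le⟩

lemma xor_left {A B : Prop} (hB : ¬ B) : Xor' A B ↔ A := by unfold Xor' Xor; tauto
lemma xor_right {A B : Prop} (hA : ¬ A) : Xor' A B ↔ B := by unfold Xor' Xor; tauto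

lemma sum_filter_product_insert (w : Arrow) (E : Finset Arrow) (hw : w ∉ E)
    (P : Arrow → Arrow → Prop) (hww : ¬ P w w) :
    ∑ p ∈ ((insert w E) ×ˢ (insert w E)).filter (fun p => P p.1 p.2), (p.1.sgn * p.2.sgn : ℤ)
      = (∑ y ∈ E, ((if P w y then (w.sgn * y.sgn : ℤ) else 0) + (if P y w then (y.sgn * w.sgn : ℤ) else 0)))
        + ∑ p ∈ (E ×ˢ E).filter (fun p => P p.1 p.2), (p.1.sgn * p.2.sgn : ℤ) := by
  rw [Finset.sum_filter, Finset.sum_product]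
  simp only [Finset.sum_insert hw]
  rw [if_neg hww, Finset.sum_add_distrib]
  rw [Finset.sum_filter, Finset.sum_product, Finset.sum_add_distrib]
  ring

lemma key_sum (E : Finset Arrow) (c : ℝ) (σ : ℤ)
    (hidx : ∑ y ∈ E, (if Between y.t y.h c then (if y.h < c then (1:ℤ) else -1) * σ * y.sgn else 0) = 0) :
    ∑ y ∈ E, (if Between y.t y.h c ∧ y.h < c then (σ * y.sgn : ℤ) else 0)
      = ∑ y ∈ E, (if Between y.t y.h c ∧ c < y.h then (σ * y.sgn : ℤ) else 0) := by
  rw [← sub_eq_zero, ← Finset.sum_sub_distrib]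
  rw [show (∑ y ∈ E, ((if Between y.t y.h c ∧ y.h < c then (σ * y.sgn : ℤ) else 0) - (if Between y.t y.h c ∧ c < y.h then (σ * y.sgn : ℤ) else 0))) = ∑ y ∈ E, (if Between y.t y.h c then (if y.h < c then (1:ℤ) else -1) * σ * y.sgn else 0) from Finset.sum_congr rfl ?_, hidx]
  intro y _
  by_cases hB : Between y.t y.h c
  · by_cases hh : y.h < c
    · rw [if_pos ⟨hB, hh⟩, if_neg (fun h => absurd hh (not_lt.mpr h.2.le)), if_pos hB, if_pos hh]; ring
    · have hch : c < y.h := by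
        rcases hB with ⟨_, h⟩ | ⟨h, _⟩
        · exact h
        · exact absurd h hh
      rw [if_neg (fun h => hh h.2), if_pos ⟨hB, hch⟩, if_pos hB, if_neg hh]; ring
  · rw [if_neg (fun h => hB h.1), if_neg (fun h => hB h.1), if_neg hB]; ring


/-- the order-two invariants `v21` and `v22` are unchanged when a
zero-index diagram is rotated (the smallest endpoint is moved past the right
end, keeping its role as head or tail). -/
theorem stmt6 (D : Finset Arrow) (hD : IsGaussDiagram D)
    (hzero : ∀ x ∈ D, index D x = 0)
    (z : Arrow) (hz : z ∈ D)
    (e : ℝ) (he : e = z.t ∨ e = z.h) (hmin : ∀ r, IsEndpoint D r → e ≤ r)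
    (M : ℝ) (hM : ∀ r, IsEndpoint D r → r < M) :
    let z' : Arrow := if e = z.t then ⟨M, z.h, z.sgn⟩ else ⟨z.t, M, z.sgn⟩
    let D' : Finset Arrow := insert z' (D.erase z)
    v21 D' = v21 D ∧ v22 D' = v22 D := by
  intro z' D'
  have hzth : z.t ≠ z.h := hD.2.1 z hz
  unfold D' z'
  rcases he with he | he
  · -- Case 1 : e = z.t
    rw [if_pos he]
    set E := D.erase z with hEdef
    set w : Arrow := ⟨M, z.h, z.sgn⟩ with hwdef
    have hwt : w.t = M := by rw [hwdef]
    have hwh : w.h = z.h := by rw [hwdef]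
    have hws : w.sgn = z.sgn := by rw [hwdef]
    have hE : D = insert z E := (Finset.insert_erase hz).symm
    have hznE : z ∉ E := Finset.notMem_erase z D
    have hec : e < z.h := (hmin z.h ⟨z, hz, Or.inr rfl⟩).lt_of_ne (by rw [he]; exact hzth)
    have hcM : z.h < M := hM z.h ⟨z, hz, Or.inr rfl⟩
    have hwE : w ∉ E := by
      intro hmem
      rw [hEdef] at hmem
      exact absurd (hM M ⟨w, Finset.mem_of_mem_erase hmem, Or.inl hwt.symm⟩) (lt_irrefl M)
    have hfacts : ∀ y ∈ E, e < y.t ∧ e < y.h ∧ y.t < M ∧ y.h < M ∧ y.t ≠ y.h ∧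
        y.t ≠ z.h ∧ y.h ≠ z.h ∧ y ≠ z := by
      intro y hy
      have hyD : y ∈ D := Finset.mem_of_mem_erase hy
      have hyz : y ≠ z := Finset.ne_of_mem_erase hy
      obtain ⟨d1, d2, d3, d4⟩ := hD.2.2 y hyD z hz hyz
      refine ⟨(hmin y.t ⟨y, hyD, Or.inl rfl⟩).lt_of_ne ?_,
        (hmin y.h ⟨y, hyD, Or.inr rfl⟩).lt_of_ne ?_,
        hM y.t ⟨y, hyD, Or.inl rfl⟩, hM y.h ⟨y, hyD, Or.inr rfl⟩, hD.2.1 y hyD, d2, d4, hyz⟩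
      · rw [he]; exact d1.symm
      · rw [he]; exact d3.symm
    have hBt : ∀ y ∈ E, (Between z.t z.h y.t ↔ y.t < z.h) := by
      intro y hy
      obtain ⟨h1, -, -, -, -, -, -, -⟩ := hfacts y hy
      rw [← he, between_iff_of_lt hec]
      exact and_iff_right h1
    have hBh : ∀ y ∈ E, (Between z.t z.h y.h ↔ y.h < z.h) := by
      intro y hy
      obtain ⟨-, h2, -, -, -, -, -, -⟩ := hfacts y hy
      rw [← he, between_iff_of_lt hec]
      exact and_iff_right h2
    have hLzy : ∀ y ∈ E, (Linked z y ↔ Between y.t y.h z.h) := by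
      intro y hy
      obtain ⟨h1, h2, h3, h4, h5, h6, h7, h8⟩ := hfacts y hy
      unfold Linked
      rw [hBt y hy, hBh y hy, xor_lt_iff_between h6 h7]
      exact and_iff_right h8.symm
    have hLyw : ∀ y ∈ E, (Linked y w ↔ Between y.t y.h z.h) := by
      intro y hy
      obtain ⟨h1, h2, h3, h4, h5, h6, h7, h8⟩ := hfacts y hy
      have hyw : y ≠ w := by
        intro hh
        rw [hh, hwt] at h3
        exact lt_irrefl M h3
      unfold Linked
      rw [hwt, hwh, xor_right (not_between_high h3 h4)]
      exact and_iff_right hyw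
    have hnl : ¬ Linked z z := fun h => h.1 rfl
    have h0 := hzero z hz
    unfold index at h0
    rw [hE, Finset.sum_filter, Finset.sum_insert hznE, if_neg hnl, zero_add] at h0
    have hidx : ∑ y ∈ E,
        (if Between y.t y.h z.h then (if y.h < z.h then (1:ℤ) else -1) * z.sgn * y.sgn else 0)
        = 0 := by
      refine Eq.trans (Finset.sum_congr rfl fun y hy => ?_) h0
      have hd : delta z y = if y.h < z.h then (1:ℤ) else -1 := by
        unfold delta
        exact if_congr (hBh y hy) rfl rfl
      exact if_congr (hLzy y hy).symm (by rw [hd]) rfl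
    have c21z : ∀ y ∈ E,
        ((if (z.t < y.t ∧ Linked z y ∧ HeadsOut z y) then (z.sgn * y.sgn : ℤ) else 0)
          + (if (y.t < z.t ∧ Linked y z ∧ HeadsOut y z) then (y.sgn * z.sgn : ℤ) else 0)) = 0 := by
      intro y hy
      obtain ⟨h1, h2, h3, h4, h5, h6, h7, h8⟩ := hfacts y hy
      have hA : ¬ (z.t < y.t ∧ Linked z y ∧ HeadsOut z y) := by
        rintro ⟨-, hL, hO⟩
        exact hO.2 ((hLzy y hy).mp hL)
      have hB2 : ¬ (y.t < z.t ∧ Linked y z ∧ HeadsOut y z) := by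
        rintro ⟨ht, -, -⟩
        rw [← he] at ht
        exact absurd ht (not_lt.mpr h1.le)
      rw [if_neg hA, if_neg hB2, add_zero]
    have c21w : ∀ y ∈ E,
        ((if (w.t < y.t ∧ Linked w y ∧ HeadsOut w y) then (w.sgn * y.sgn : ℤ) else 0)
          + (if (y.t < w.t ∧ Linked y w ∧ HeadsOut y w) then (y.sgn * w.sgn : ℤ) else 0)) = 0 := by
      intro y hy
      obtain ⟨h1, h2, h3, h4, h5, h6, h7, h8⟩ := hfacts y hy
      have hA : ¬ (w.t < y.t ∧ Linked w y ∧ HeadsOut w y) := by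
        rintro ⟨ht, -, -⟩
        rw [hwt] at ht
        exact absurd ht (not_lt.mpr h3.le)
      have hB2 : ¬ (y.t < w.t ∧ Linked y w ∧ HeadsOut y w) := by
        rintro ⟨-, hL, hO⟩
        have h9 := hO.1
        rw [hwh] at h9
        exact h9 ((hLyw y hy).mp hL)
      rw [if_neg hA, if_neg hB2, add_zero]
    have c22z : ∀ y ∈ E,
        ((if (z.t < y.t ∧ Linked z y ∧ HeadsIn z y) then (z.sgn * y.sgn : ℤ) else 0)
          + (if (y.t < z.t ∧ Linked y z ∧ HeadsIn y z) then (y.sgn * z.sgn : ℤ) else 0))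
        = (if (Between y.t y.h z.h ∧ y.h < z.h) then (z.sgn * y.sgn : ℤ) else 0) := by
      intro y hy
      obtain ⟨h1, h2, h3, h4, h5, h6, h7, h8⟩ := hfacts y hy
      have hB2 : ¬ (y.t < z.t ∧ Linked y z ∧ HeadsIn y z) := by
        rintro ⟨ht, -, -⟩
        rw [← he] at ht
        exact absurd ht (not_lt.mpr h1.le)
      rw [if_neg hB2, add_zero]
      refine if_congr ?_ rfl rfl
      constructor
      · rintro ⟨-, hL, hI⟩
        exact ⟨(hLzy y hy).mp hL, (hBh y hy).mp hI.1⟩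
      · rintro ⟨hB, hh⟩
        exact ⟨by rw [← he]; exact h1, (hLzy y hy).mpr hB, (hBh y hy).mpr hh, hB⟩
    have c22w : ∀ y ∈ E,
        ((if (w.t < y.t ∧ Linked w y ∧ HeadsIn w y) then (w.sgn * y.sgn : ℤ) else 0)
          + (if (y.t < w.t ∧ Linked y w ∧ HeadsIn y w) then (y.sgn * w.sgn : ℤ) else 0))
        = (if (Between y.t y.h z.h ∧ z.h < y.h) then (z.sgn * y.sgn : ℤ) else 0) := by
      intro y hy
      obtain ⟨h1, h2, h3, h4, h5, h6, h7, h8⟩ := hfacts y hy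
      have hA : ¬ (w.t < y.t ∧ Linked w y ∧ HeadsIn w y) := by
        rintro ⟨ht, -, -⟩
        rw [hwt] at ht
        exact absurd ht (not_lt.mpr h3.le)
      have hBwh : Between w.t w.h y.h ↔ z.h < y.h := by
        rw [hwt, hwh, between_comm, between_iff_of_lt hcM]
        exact and_iff_left h4
      rw [if_neg hA, zero_add]
      refine if_congr ?_ (by rw [hws]; ring) rfl
      constructor
      · rintro ⟨-, hL, hI⟩
        exact ⟨(hLyw y hy).mp hL, hBwh.mp hI.2⟩
      · rintro ⟨hB, hh⟩
        refine ⟨by rw [hwt]; exact h3, (hLyw y hy).mpr hB, ?_, hBwh.mpr hh⟩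
        rw [hwh]; exact hB
    have E21z : v21 (insert z E)
        = (∑ y ∈ E, ((if (z.t < y.t ∧ Linked z y ∧ HeadsOut z y) then (z.sgn * y.sgn : ℤ) else 0)
            + (if (y.t < z.t ∧ Linked y z ∧ HeadsOut y z) then (y.sgn * z.sgn : ℤ) else 0)))
          + ∑ p ∈ E, ∑ q ∈ E, (if (p.t < q.t ∧ Linked p q ∧ HeadsOut p q) then (p.sgn * q.sgn : ℤ) else 0) := by
      unfold v21
      rw [Finset.sum_filter, Finset.sum_product]
      simp only [Finset.sum_insert hznE]
      rw [if_neg (fun h => lt_irrefl z.t h.1), Finset.sum_add_distrib, Finset.sum_add_distrib]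
      ring
    have E21w : v21 (insert w E)
        = (∑ y ∈ E, ((if (w.t < y.t ∧ Linked w y ∧ HeadsOut w y) then (w.sgn * y.sgn : ℤ) else 0)
            + (if (y.t < w.t ∧ Linked y w ∧ HeadsOut y w) then (y.sgn * w.sgn : ℤ) else 0)))
          + ∑ p ∈ E, ∑ q ∈ E, (if (p.t < q.t ∧ Linked p q ∧ HeadsOut p q) then (p.sgn * q.sgn : ℤ) else 0) := by
      unfold v21
      rw [Finset.sum_filter, Finset.sum_product]
      simp only [Finset.sum_insert hwE]
      rw [if_neg (fun h => lt_irrefl w.t h.1), Finset.sum_add_distrib, Finset.sum_add_distrib]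
      ring
    have E22z : v22 (insert z E)
        = (∑ y ∈ E, ((if (z.t < y.t ∧ Linked z y ∧ HeadsIn z y) then (z.sgn * y.sgn : ℤ) else 0)
            + (if (y.t < z.t ∧ Linked y z ∧ HeadsIn y z) then (y.sgn * z.sgn : ℤ) else 0)))
          + ∑ p ∈ E, ∑ q ∈ E, (if (p.t < q.t ∧ Linked p q ∧ HeadsIn p q) then (p.sgn * q.sgn : ℤ) else 0) := by
      unfold v22
      rw [Finset.sum_filter, Finset.sum_product]
      simp only [Finset.sum_insert hznE]
      rw [if_neg (fun h => lt_irrefl z.t h.1), Finset.sum_add_distrib, Finset.sum_add_distrib]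
      ring
    have E22w : v22 (insert w E)
        = (∑ y ∈ E, ((if (w.t < y.t ∧ Linked w y ∧ HeadsIn w y) then (w.sgn * y.sgn : ℤ) else 0)
            + (if (y.t < w.t ∧ Linked y w ∧ HeadsIn y w) then (y.sgn * w.sgn : ℤ) else 0)))
          + ∑ p ∈ E, ∑ q ∈ E, (if (p.t < q.t ∧ Linked p q ∧ HeadsIn p q) then (p.sgn * q.sgn : ℤ) else 0) := by
      unfold v22
      rw [Finset.sum_filter, Finset.sum_product]
      simp only [Finset.sum_insert hwE]
      rw [if_neg (fun h => lt_irrefl w.t h.1), Finset.sum_add_distrib, Finset.sum_add_distrib]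
      ring
    rw [hE]
    constructor
    · rw [E21w, E21z, Finset.sum_eq_zero c21w, Finset.sum_eq_zero c21z]
    · rw [E22w, E22z, Finset.sum_congr rfl c22w, Finset.sum_congr rfl c22z,
        ← key_sum E z.h z.sgn hidx]
  · -- Case 2 : e = z.h
    have hne : e ≠ z.t := fun h => hzth (h.symm.trans he)
    rw [if_neg hne]
    set E := D.erase z with hEdef
    set w : Arrow := ⟨z.t, M, z.sgn⟩ with hwdef
    have hwt : w.t = z.t := by rw [hwdef]
    have hwh : w.h = M := by rw [hwdef]
    have hws : w.sgn = z.sgn := by rw [hwdef]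
    have hE : D = insert z E := (Finset.insert_erase hz).symm
    have hznE : z ∉ E := Finset.notMem_erase z D
    have hec : e < z.t := (hmin z.t ⟨z, hz, Or.inl rfl⟩).lt_of_ne (by rw [he]; exact hzth.symm)
    have hcM : z.t < M := hM z.t ⟨z, hz, Or.inl rfl⟩
    have hwE : w ∉ E := by
      intro hmem
      rw [hEdef] at hmem
      exact absurd (hM M ⟨w, Finset.mem_of_mem_erase hmem, Or.inr hwh.symm⟩) (lt_irrefl M)
    have hfacts : ∀ y ∈ E, e < y.t ∧ e < y.h ∧ y.t < M ∧ y.h < M ∧ y.t ≠ y.h ∧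
        y.t ≠ z.t ∧ y.h ≠ z.t ∧ y ≠ z := by
      intro y hy
      have hyD : y ∈ D := Finset.mem_of_mem_erase hy
      have hyz : y ≠ z := Finset.ne_of_mem_erase hy
      obtain ⟨d1, d2, d3, d4⟩ := hD.2.2 y hyD z hz hyz
      refine ⟨(hmin y.t ⟨y, hyD, Or.inl rfl⟩).lt_of_ne ?_,
        (hmin y.h ⟨y, hyD, Or.inr rfl⟩).lt_of_ne ?_,
        hM y.t ⟨y, hyD, Or.inl rfl⟩, hM y.h ⟨y, hyD, Or.inr rfl⟩, hD.2.1 y hyD, d1, d3, hyz⟩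
      · rw [he]; exact d2.symm
      · rw [he]; exact d4.symm
    have hBt : ∀ y ∈ E, (Between z.t z.h y.t ↔ y.t < z.t) := by
      intro y hy
      obtain ⟨h1, -, -, -, -, -, -, -⟩ := hfacts y hy
      rw [← he, between_comm, between_iff_of_lt hec]
      exact and_iff_right h1
    have hBh : ∀ y ∈ E, (Between z.t z.h y.h ↔ y.h < z.t) := by
      intro y hy
      obtain ⟨-, h2, -, -, -, -, -, -⟩ := hfacts y hy
      rw [← he, between_comm, between_iff_of_lt hec]
      exact and_iff_right h2
    have hLzy : ∀ y ∈ E, (Linked z y ↔ Between y.t y.h z.t) := by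
      intro y hy
      obtain ⟨h1, h2, h3, h4, h5, h6, h7, h8⟩ := hfacts y hy
      unfold Linked
      rw [hBt y hy, hBh y hy, xor_lt_iff_between h6 h7]
      exact and_iff_right h8.symm
    have hLyz : ∀ y ∈ E, (Linked y z ↔ Between y.t y.h z.t) := by
      intro y hy
      obtain ⟨h1, h2, h3, h4, h5, h6, h7, h8⟩ := hfacts y hy
      unfold Linked
      rw [← he, xor_left (not_between_low h1 h2)]
      exact and_iff_right h8
    have hBwt : ∀ y ∈ E, (Between w.t w.h y.t ↔ z.t < y.t) := by
      intro y hy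
      obtain ⟨-, -, h3, -, -, -, -, -⟩ := hfacts y hy
      rw [hwt, hwh, between_iff_of_lt hcM]
      exact and_iff_left h3
    have hBwh : ∀ y ∈ E, (Between w.t w.h y.h ↔ z.t < y.h) := by
      intro y hy
      obtain ⟨-, -, -, h4, -, -, -, -⟩ := hfacts y hy
      rw [hwt, hwh, between_iff_of_lt hcM]
      exact and_iff_left h4
    have hLwy : ∀ y ∈ E, (Linked w y ↔ Between y.t y.h z.t) := by
      intro y hy
      obtain ⟨h1, h2, h3, h4, h5, h6, h7, h8⟩ := hfacts y hy
      have hwy : w ≠ y := by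
        intro hh
        rw [← hh, hwh] at h4
        exact lt_irrefl M h4
      unfold Linked
      rw [hBwt y hy, hBwh y hy, xor_gt_iff_between h6 h7]
      exact and_iff_right hwy
    have hLyw : ∀ y ∈ E, (Linked y w ↔ Between y.t y.h z.t) := by
      intro y hy
      obtain ⟨h1, h2, h3, h4, h5, h6, h7, h8⟩ := hfacts y hy
      have hyw : y ≠ w := by
        intro hh
        rw [hh, hwh] at h4
        exact lt_irrefl M h4
      unfold Linked
      rw [hwt, hwh, xor_left (not_between_high h3 h4)]
      exact and_iff_right hyw
    have hnl : ¬ Linked z z := fun h => h.1 rfl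
    have h0 := hzero z hz
    unfold index at h0
    rw [hE, Finset.sum_filter, Finset.sum_insert hznE, if_neg hnl, zero_add] at h0
    have hidx : ∑ y ∈ E,
        (if Between y.t y.h z.t then (if y.h < z.t then (1:ℤ) else -1) * z.sgn * y.sgn else 0)
        = 0 := by
      refine Eq.trans (Finset.sum_congr rfl fun y hy => ?_) h0
      have hd : delta z y = if y.h < z.t then (1:ℤ) else -1 := by
        unfold delta
        exact if_congr (hBh y hy) rfl rfl
      exact if_congr (hLzy y hy).symm (by rw [hd]) rfl
    have c21z : ∀ y ∈ E,
        ((if (z.t < y.t ∧ Linked z y ∧ HeadsOut z y) then (z.sgn * y.sgn : ℤ) else 0)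
          + (if (y.t < z.t ∧ Linked y z ∧ HeadsOut y z) then (y.sgn * z.sgn : ℤ) else 0))
        = (if (Between y.t y.h z.t ∧ z.t < y.h) then (z.sgn * y.sgn : ℤ) else 0) := by
      intro y hy
      obtain ⟨h1, h2, h3, h4, h5, h6, h7, h8⟩ := hfacts y hy
      have hA : ¬ (z.t < y.t ∧ Linked z y ∧ HeadsOut z y) := by
        rintro ⟨ht, hL, hO⟩
        have hB := (hLzy y hy).mp hL
        have h9 : ¬ y.h < z.t := fun hh => hO.1 ((hBh y hy).mpr hh)
        rcases hB with ⟨ha, hb⟩ | ⟨ha, hb⟩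
        · exact absurd ha (not_lt.mpr ht.le)
        · exact h9 ha
      rw [if_neg hA, zero_add]
      refine if_congr ?_ (mul_comm _ _) rfl
      constructor
      · rintro ⟨ht, hL, hO⟩
        refine ⟨(hLyz y hy).mp hL, ?_⟩
        have h9 : ¬ y.h < z.t := fun hh => hO.2 ((hBh y hy).mpr hh)
        exact (not_lt.mp h9).lt_of_ne h7.symm
      · rintro ⟨hB, hh⟩
        have ht : y.t < z.t := by
          rcases hB with ⟨ha, hb⟩ | ⟨ha, hb⟩
          · exact ha
          · linarith
        have hnbe : ¬ Between y.t y.h z.h := by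
          rw [← he]; exact not_between_low h1 h2
        refine ⟨ht, ⟨h8, (xor_left hnbe).mpr hB⟩, hnbe, ?_⟩
        exact fun hcon => (not_lt.mpr hh.le) ((hBh y hy).mp hcon)
    have c21w : ∀ y ∈ E,
        ((if (w.t < y.t ∧ Linked w y ∧ HeadsOut w y) then (w.sgn * y.sgn : ℤ) else 0)
          + (if (y.t < w.t ∧ Linked y w ∧ HeadsOut y w) then (y.sgn * w.sgn : ℤ) else 0))
        = (if (Between y.t y.h z.t ∧ y.h < z.t) then (z.sgn * y.sgn : ℤ) else 0) := by
      intro y hy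
      obtain ⟨h1, h2, h3, h4, h5, h6, h7, h8⟩ := hfacts y hy
      have hB2 : ¬ (y.t < w.t ∧ Linked y w ∧ HeadsOut y w) := by
        rintro ⟨ht, hL, hO⟩
        rw [hwt] at ht
        have hB := (hLyw y hy).mp hL
        have h9 : ¬ z.t < y.h := fun hh => hO.2 ((hBwh y hy).mpr hh)
        rcases hB with ⟨ha, hb⟩ | ⟨ha, hb⟩
        · exact h9 hb
        · exact absurd hb (not_lt.mpr ht.le)
      rw [if_neg hB2, add_zero]
      refine if_congr ?_ (by rw [hws]) rfl
      constructor
      · rintro ⟨ht, hL, hO⟩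
        refine ⟨(hLwy y hy).mp hL, ?_⟩
        have h9 : ¬ z.t < y.h := fun hh => hO.1 ((hBwh y hy).mpr hh)
        exact (not_lt.mp h9).lt_of_ne h7
      · rintro ⟨hB, hh⟩
        have ht : z.t < y.t := by
          rcases hB with ⟨ha, hb⟩ | ⟨ha, hb⟩
          · linarith
          · exact hb
        have hnbM : ¬ Between y.t y.h w.h := by
          rw [hwh]; exact not_between_high h3 h4
        have hnwh : ¬ Between w.t w.h y.h :=
          fun hcon => (not_lt.mpr hh.le) ((hBwh y hy).mp hcon)
        refine ⟨by rw [hwt]; exact ht, ⟨?_, ?_⟩, hnwh, hnbM⟩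
        · intro hh2
          rw [← hh2, hwh] at h4
          exact lt_irrefl M h4
        · exact (xor_left hnwh).mpr ((hBwt y hy).mpr ht)
    have c22z : ∀ y ∈ E,
        ((if (z.t < y.t ∧ Linked z y ∧ HeadsIn z y) then (z.sgn * y.sgn : ℤ) else 0)
          + (if (y.t < z.t ∧ Linked y z ∧ HeadsIn y z) then (y.sgn * z.sgn : ℤ) else 0)) = 0 := by
      intro y hy
      obtain ⟨h1, h2, h3, h4, h5, h6, h7, h8⟩ := hfacts y hy
      have hA : ¬ (z.t < y.t ∧ Linked z y ∧ HeadsIn z y) := by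
        rintro ⟨-, -, hI⟩
        have h9 := hI.2
        rw [← he] at h9
        exact not_between_low h1 h2 h9
      have hB2 : ¬ (y.t < z.t ∧ Linked y z ∧ HeadsIn y z) := by
        rintro ⟨-, -, hI⟩
        have h9 := hI.1
        rw [← he] at h9
        exact not_between_low h1 h2 h9
      rw [if_neg hA, if_neg hB2, add_zero]
    have c22w : ∀ y ∈ E,
        ((if (w.t < y.t ∧ Linked w y ∧ HeadsIn w y) then (w.sgn * y.sgn : ℤ) else 0)
          + (if (y.t < w.t ∧ Linked y w ∧ HeadsIn y w) then (y.sgn * w.sgn : ℤ) else 0)) = 0 := by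
      intro y hy
      obtain ⟨h1, h2, h3, h4, h5, h6, h7, h8⟩ := hfacts y hy
      have hA : ¬ (w.t < y.t ∧ Linked w y ∧ HeadsIn w y) := by
        rintro ⟨-, -, hI⟩
        have h9 := hI.2
        rw [hwh] at h9
        exact not_between_high h3 h4 h9
      have hB2 : ¬ (y.t < w.t ∧ Linked y w ∧ HeadsIn y w) := by
        rintro ⟨-, -, hI⟩
        have h9 := hI.1
        rw [hwh] at h9
        exact not_between_high h3 h4 h9
      rw [if_neg hA, if_neg hB2, add_zero]
    have E21z : v21 (insert z E)
        = (∑ y ∈ E, ((if (z.t < y.t ∧ Linked z y ∧ HeadsOut z y) then (z.sgn * y.sgn : ℤ) else 0)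
            + (if (y.t < z.t ∧ Linked y z ∧ HeadsOut y z) then (y.sgn * z.sgn : ℤ) else 0)))
          + ∑ p ∈ E, ∑ q ∈ E, (if (p.t < q.t ∧ Linked p q ∧ HeadsOut p q) then (p.sgn * q.sgn : ℤ) else 0) := by
      unfold v21
      rw [Finset.sum_filter, Finset.sum_product]
      simp only [Finset.sum_insert hznE]
      rw [if_neg (fun h => lt_irrefl z.t h.1), Finset.sum_add_distrib, Finset.sum_add_distrib]
      ring
    have E21w : v21 (insert w E)
        = (∑ y ∈ E, ((if (w.t < y.t ∧ Linked w y ∧ HeadsOut w y) then (w.sgn * y.sgn : ℤ) else 0)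
            + (if (y.t < w.t ∧ Linked y w ∧ HeadsOut y w) then (y.sgn * w.sgn : ℤ) else 0)))
          + ∑ p ∈ E, ∑ q ∈ E, (if (p.t < q.t ∧ Linked p q ∧ HeadsOut p q) then (p.sgn * q.sgn : ℤ) else 0) := by
      unfold v21
      rw [Finset.sum_filter, Finset.sum_product]
      simp only [Finset.sum_insert hwE]
      rw [if_neg (fun h => lt_irrefl w.t h.1), Finset.sum_add_distrib, Finset.sum_add_distrib]
      ring
    have E22z : v22 (insert z E)
        = (∑ y ∈ E, ((if (z.t < y.t ∧ Linked z y ∧ HeadsIn z y) then (z.sgn * y.sgn : ℤ) else 0)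
            + (if (y.t < z.t ∧ Linked y z ∧ HeadsIn y z) then (y.sgn * z.sgn : ℤ) else 0)))
          + ∑ p ∈ E, ∑ q ∈ E, (if (p.t < q.t ∧ Linked p q ∧ HeadsIn p q) then (p.sgn * q.sgn : ℤ) else 0) := by
      unfold v22
      rw [Finset.sum_filter, Finset.sum_product]
      simp only [Finset.sum_insert hznE]
      rw [if_neg (fun h => lt_irrefl z.t h.1), Finset.sum_add_distrib, Finset.sum_add_distrib]
      ring
    have E22w : v22 (insert w E)
        = (∑ y ∈ E, ((if (w.t < y.t ∧ Linked w y ∧ HeadsIn w y) then (w.sgn * y.sgn : ℤ) else 0)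
            + (if (y.t < w.t ∧ Linked y w ∧ HeadsIn y w) then (y.sgn * w.sgn : ℤ) else 0)))
          + ∑ p ∈ E, ∑ q ∈ E, (if (p.t < q.t ∧ Linked p q ∧ HeadsIn p q) then (p.sgn * q.sgn : ℤ) else 0) := by
      unfold v22
      rw [Finset.sum_filter, Finset.sum_product]
      simp only [Finset.sum_insert hwE]
      rw [if_neg (fun h => lt_irrefl w.t h.1), Finset.sum_add_distrib, Finset.sum_add_distrib]
      ring
    rw [hE]
    constructor
    · rw [E21w, E21z, Finset.sum_congr rfl c21w, Finset.sum_congr rfl c21z,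
        key_sum E z.t z.sgn hidx]
    · rw [E22w, E22z, Finset.sum_eq_zero c22w, Finset.sum_eq_zero c22z]

end Gauss
end
end

section
/- For every Gauss diagram D on the Wilson line, the sum of the indices of all arrows of D satisfies Σ_{x ∈ D} I_D(x) = 2·(v22(D) − v21(D)). Consequently, for a linked pair {x,y}, δ(x,y) + δ(y,x) equals 2 if the pair is heads-in, −2 if the pair is heads-out, and 0 otherwise. -/
noncomputable section

namespace Gauss

attribute [local instance] Classical.propDecidable

lemma between_swap (a b p : ℝ) : Between a b p ↔ Between b a p := or_comm

lemma core {a b c d : ℝ} (hab : a < b) (hcd : c < d) (hac : a ≠ c) (hbd : b ≠ d) :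
    Xor' (Between a b c) (Between a b d) → Xor' (Between c d a) (Between c d b) := by
  rintro (⟨hc, hnd⟩ | ⟨hd, hnc⟩)
  · have hc' : a < c ∧ c < b := by
      rcases hc with h | h
      · exact h
      · exact absurd hab (by linarith [h.1, h.2])
    have hbd' : b < d := by
      by_contra hle
      push_neg at hle
      have hdb : d < b := lt_of_le_of_ne hle fun e => hbd e.symm
      exact hnd (Or.inl ⟨by linarith [hc'.1], hdb⟩)
    refine Or.inr ⟨Or.inl ⟨hc'.2, hbd'⟩, ?_⟩
    rintro (⟨x1, x2⟩ | ⟨x1, x2⟩) <;> linarith [hc'.1, hc'.2]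
  · have hd' : a < d ∧ d < b := by
      rcases hd with h | h
      · exact h
      · exact absurd hab (by linarith [h.1, h.2])
    have hca : c < a := by
      by_contra hle
      push_neg at hle
      have : a < c := lt_of_le_of_ne hle hac
      exact hnc (Or.inl ⟨this, by linarith [hd'.2]⟩)
    refine Or.inl ⟨Or.inl ⟨hca, hd'.1⟩, ?_⟩
    rintro (⟨x1, x2⟩ | ⟨x1, x2⟩) <;> linarith [hd'.1, hd'.2]

lemma linked_symm_s8 {D : Finset Arrow} (hD : IsGaussDiagram D) {x y : Arrow}
    (hx : x ∈ D) (hy : y ∈ D) (h : Linked x y) : Linked y x := by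
  obtain ⟨hne, hxor⟩ := h
  obtain ⟨_, hth, hdist⟩ := hD
  obtain ⟨d1, d2, d3, d4⟩ := hdist x hx y hy hne
  refine ⟨hne.symm, ?_⟩
  have h1 := hth x hx
  have h2 := hth y hy
  rcases lt_or_gt_of_ne h1 with c1 | c1 <;> rcases lt_or_gt_of_ne h2 with c2 | c2
  · exact core c1 c2 d1 d4 hxor
  · rw [between_swap y.t y.h x.t, between_swap y.t y.h x.h]
    exact core c1 c2 d2 d3 hxor.symm
  · rw [show Between x.t x.h y.t ↔ Between x.h x.t y.t from or_comm,
        show Between x.t x.h y.h ↔ Between x.h x.t y.h from or_comm] at hxor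
    exact (core (a := x.h) (b := x.t) c1 c2 d3 d2 hxor).symm
  · rw [between_swap y.t y.h x.t, between_swap y.t y.h x.h]
    rw [show Between x.t x.h y.t ↔ Between x.h x.t y.t from or_comm,
        show Between x.t x.h y.h ↔ Between x.h x.t y.h from or_comm] at hxor
    exact (core (a := x.h) (b := x.t) c1 c2 d4 d1 hxor.symm).symm

lemma dd_vals (x y : Arrow) :
    (HeadsIn x y → delta x y + delta y x = 2) ∧
    (HeadsOut x y → delta x y + delta y x = -2) ∧
    (¬ HeadsIn x y → ¬ HeadsOut x y → delta x y + delta y x = 0) := by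
  unfold HeadsIn HeadsOut delta
  by_cases h1 : Between x.t x.h y.h <;> by_cases h2 : Between y.t y.h x.h <;>
    simp [h1, h2]

/-- the sum of all indices equals `2·(v22 − v21)`; moreover for a
linked pair, `δ(x,y) + δ(y,x)` is `2`, `-2`, or `0` according to whether the
pair is heads-in, heads-out, or mixed. -/
theorem stmt8 (D : Finset Arrow) (hD : IsGaussDiagram D) :
    (∑ x ∈ D, index D x) = 2 * (v22 D - v21 D) ∧
    ∀ x ∈ D, ∀ y ∈ D, Linked x y →
      (HeadsIn x y → delta x y + delta y x = 2) ∧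
      (HeadsOut x y → delta x y + delta y x = -2) ∧
      (¬ HeadsIn x y → ¬ HeadsOut x y → delta x y + delta y x = 0) := by
  classical
  constructor
  · -- the sum identity
    obtain ⟨hsgn, hth, hdist⟩ := hD
    have htne : ∀ p : Arrow × Arrow, p ∈ (D ×ˢ D) → Linked p.1 p.2 → p.1.t ≠ p.2.t := by
      rintro ⟨x, y⟩ hp ⟨hne, _⟩
      rw [Finset.mem_product] at hp
      exact (hdist x hp.1 y hp.2 hne).1
    set S := (D ×ˢ D).filter (fun p => Linked p.1 p.2) with hS
    set T := (D ×ˢ D).filter (fun p => p.1.t < p.2.t ∧ Linked p.1 p.2) with hT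
    have stepA : (∑ x ∈ D, index D x)
        = ∑ p ∈ S, delta p.1 p.2 * p.1.sgn * p.2.sgn := by
      rw [hS, Finset.sum_filter, Finset.sum_product]
      unfold index
      refine Finset.sum_congr rfl fun x _ => ?_
      rw [Finset.sum_filter]
    have hTsub : T = S.filter (fun p => p.1.t < p.2.t) := by
      rw [hS, hT, Finset.filter_filter]
      exact Finset.filter_congr fun p _ => by tauto
    have stepB : (∑ p ∈ S, delta p.1 p.2 * p.1.sgn * p.2.sgn)
        = (∑ p ∈ T, delta p.1 p.2 * p.1.sgn * p.2.sgn)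
          + ∑ p ∈ S.filter (fun p => ¬ p.1.t < p.2.t), delta p.1 p.2 * p.1.sgn * p.2.sgn := by
      rw [hTsub, Finset.sum_filter_add_sum_filter_not]
    have stepD : (∑ p ∈ S.filter (fun p => ¬ p.1.t < p.2.t), delta p.1 p.2 * p.1.sgn * p.2.sgn)
        = ∑ p ∈ T, delta p.2 p.1 * p.2.sgn * p.1.sgn := by
      refine (Finset.sum_nbij' (fun p => Prod.swap p) (fun p => Prod.swap p) ?_ ?_ ?_ ?_ ?_).symm
      · intro p hp
        rw [hT, Finset.mem_filter] at hp
        obtain ⟨hpm, hlt, hlk⟩ := hp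
        rw [Finset.mem_product] at hpm
        rw [hS, Finset.mem_filter, Finset.mem_filter, Finset.mem_product]
        exact ⟨⟨⟨hpm.2, hpm.1⟩, linked_symm_s8 ⟨hsgn, hth, hdist⟩ hpm.1 hpm.2 hlk⟩,
          not_lt_of_gt hlt⟩
      · intro p hp
        rw [Finset.mem_filter, hS, Finset.mem_filter] at hp
        obtain ⟨⟨hpm, hlk⟩, hnlt⟩ := hp
        rw [Finset.mem_product] at hpm
        rw [hT, Finset.mem_filter, Finset.mem_product]
        refine ⟨⟨hpm.2, hpm.1⟩, ?_, linked_symm_s8 ⟨hsgn, hth, hdist⟩ hpm.1 hpm.2 hlk⟩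
        have := htne p (Finset.mem_product.mpr hpm) hlk
        exact lt_of_le_of_ne (not_lt.mp hnlt) (Ne.symm this)
      · intro p _; rfl
      · intro p _; rfl
      · intro p _; rfl
    have stepE : (∑ x ∈ D, index D x)
        = ∑ p ∈ T, (delta p.1 p.2 + delta p.2 p.1) * (p.1.sgn * p.2.sgn) := by
      rw [stepA, stepB, stepD, ← Finset.sum_add_distrib]
      exact Finset.sum_congr rfl fun p _ => by ring
    -- now split T by HeadsIn / HeadsOut
    have hHIHO : ∀ x y : Arrow, HeadsIn x y → ¬ HeadsOut x y := by
      rintro x y ⟨h1, _⟩ ⟨h1', _⟩; exact h1' h1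
    have splitT : (∑ p ∈ T, (delta p.1 p.2 + delta p.2 p.1) * (p.1.sgn * p.2.sgn))
        = (∑ p ∈ T.filter (fun p => HeadsIn p.1 p.2),
            (delta p.1 p.2 + delta p.2 p.1) * (p.1.sgn * p.2.sgn))
          + ((∑ p ∈ (T.filter (fun p => ¬ HeadsIn p.1 p.2)).filter (fun p => HeadsOut p.1 p.2),
              (delta p.1 p.2 + delta p.2 p.1) * (p.1.sgn * p.2.sgn))
            + ∑ p ∈ (T.filter (fun p => ¬ HeadsIn p.1 p.2)).filter (fun p => ¬ HeadsOut p.1 p.2),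
              (delta p.1 p.2 + delta p.2 p.1) * (p.1.sgn * p.2.sgn)) := by
      rw [Finset.sum_filter_add_sum_filter_not,
        Finset.sum_filter_add_sum_filter_not]
    have e22 : T.filter (fun p => HeadsIn p.1 p.2)
        = (D ×ˢ D).filter (fun p => p.1.t < p.2.t ∧ Linked p.1 p.2 ∧ HeadsIn p.1 p.2) := by
      rw [hT, Finset.filter_filter]
      exact Finset.filter_congr fun p _ => by tauto
    have e21 : (T.filter (fun p => ¬ HeadsIn p.1 p.2)).filter (fun p => HeadsOut p.1 p.2)
        = (D ×ˢ D).filter (fun p => p.1.t < p.2.t ∧ Linked p.1 p.2 ∧ HeadsOut p.1 p.2) := by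
      rw [hT, Finset.filter_filter, Finset.filter_filter]
      refine Finset.filter_congr fun p _ => ?_
      constructor
      · rintro ⟨⟨h1, h2⟩, _, h4⟩; exact ⟨h1, h2, h4⟩
      · rintro ⟨h1, h2, h4⟩; exact ⟨⟨h1, h2⟩, fun hHI => hHIHO _ _ hHI h4, h4⟩
    have sum22 : (∑ p ∈ T.filter (fun p => HeadsIn p.1 p.2),
        (delta p.1 p.2 + delta p.2 p.1) * (p.1.sgn * p.2.sgn)) = 2 * v22 D := by
      rw [e22, v22, Finset.mul_sum]
      refine Finset.sum_congr rfl fun p hp => ?_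
      rw [Finset.mem_filter] at hp
      rw [(dd_vals p.1 p.2).1 hp.2.2.2]
    have sum21 : (∑ p ∈ (T.filter (fun p => ¬ HeadsIn p.1 p.2)).filter (fun p => HeadsOut p.1 p.2),
        (delta p.1 p.2 + delta p.2 p.1) * (p.1.sgn * p.2.sgn)) = -2 * v21 D := by
      rw [e21, v21, Finset.mul_sum]
      refine Finset.sum_congr rfl fun p hp => ?_
      rw [Finset.mem_filter] at hp
      rw [(dd_vals p.1 p.2).2.1 hp.2.2.2]
    have sum0 : (∑ p ∈ (T.filter (fun p => ¬ HeadsIn p.1 p.2)).filter (fun p => ¬ HeadsOut p.1 p.2),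
        (delta p.1 p.2 + delta p.2 p.1) * (p.1.sgn * p.2.sgn)) = 0 := by
      refine Finset.sum_eq_zero fun p hp => ?_
      rw [Finset.mem_filter, Finset.mem_filter] at hp
      rw [(dd_vals p.1 p.2).2.2 hp.1.2 hp.2, zero_mul]
    rw [stepE, splitT, sum22, sum21, sum0]
    ring
  · intro x _ y _ _
    exact dd_vals x y

end Gauss
end
end

section
/- For every integer n ≥ 1 there exists a solution of the order-n system with c_0 ≠ 0; that is, there exist integers c_0 ≠ 0 and c_{i,j} for i,j ≥ 0 with i + j ≤ n − 1 such that, setting c_{i,j} = (−1)^j·c_0 whenever i + j = n, one has c_{i,j} + c_{i−1,j} + c_{i,j−1} = 0 for all i, j ≥ 1 with i + j ≤ n. (This is the existence of a combinatorial parity formula generated by R^n, and likewise by L^n, on the Wilson line.) -/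
/-- for every `n ≥ 1` the order-`n` system has a solution with
`c₀ ≠ 0`: there are integers `c₀ ≠ 0` and `c i j` which take the value
`(-1)^j · c₀` whenever `i + j = n` and satisfy the second-Reidemeister-move
equations `c i j + c (i-1) j + c i (j-1) = 0` for all `i, j ≥ 1` with
`i + j ≤ n`.  (Existence of a combinatorial parity formula generated by `Rⁿ`,
and likewise by `Lⁿ`, on the Wilson line.) -/
theorem stmt9 (n : ℕ) (hn : 1 ≤ n) :
    ∃ (c0 : ℤ) (c : ℕ → ℕ → ℤ), c0 ≠ 0 ∧
      (∀ i j : ℕ, i + j = n → c i j = (-1) ^ j * c0) ∧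
      (∀ i j : ℕ, 1 ≤ i → 1 ≤ j → i + j ≤ n →
        c i j + c (i - 1) j + c i (j - 1) = 0) := by
  refine ⟨1, fun i j => (-1) ^ j * (Nat.choose (i + (n - i - j) - 1) (n - i - j) : ℤ),
    one_ne_zero, ?_, ?_⟩
  · intro i j h
    have h0 : n - i - j = 0 := by omega
    simp [h0]
  · intro i j hi hj hij
    simp only
    have hm1 : n - (i - 1) - j = (n - i - j) + 1 := by omega
    have hm2 : n - i - (j - 1) = (n - i - j) + 1 := by omega
    set m := n - i - j with hm
    rw [hm1, hm2]
    have h1 : i - 1 + (m + 1) - 1 = i + m - 1 := by omega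
    have h2 : i + (m + 1) - 1 = (i + m - 1) + 1 := by omega
    have h3 : i + m - 1 = i - 1 + m := by omega
    rw [h1, h2]
    have hp : Nat.choose ((i + m - 1) + 1) (m + 1)
        = Nat.choose (i + m - 1) m + Nat.choose (i + m - 1) (m + 1) :=
      Nat.choose_succ_succ _ _
    have hjj : j = (j - 1) + 1 := by omega
    rw [hjj, hp]
    push_cast
    ring
end

section
/- For every even integer n ≥ 2 there exists a symmetric solution of the order-n system with c_0 = 2; that is, there exist integers c_{i,j} for i,j ≥ 0 with i + j ≤ n − 1 satisfying c_{i,j} = c_{j,i} for all i, j, such that, setting c_0 = 2 and c_{i,j} = (−1)^j·c_0 whenever i + j = n, one has c_{i,j} + c_{i−1,j} + c_{i,j−1} = 0 for all i, j ≥ 1 with i + j ≤ n. -/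
/-- for every even `n ≥ 2` the order-`n` system has a symmetric
solution with `c₀ = 2`: there are integers `c i j`, symmetric in `i, j` in
degrees `≤ n - 1`, taking the value `(-1)^j · 2` whenever `i + j = n`, and
satisfying `c i j + c (i-1) j + c i (j-1) = 0` for all `i, j ≥ 1` with
`i + j ≤ n`. -/
theorem stmt10 (n : ℕ) (hn : 2 ≤ n) (heven : Even n) :
    ∃ c : ℕ → ℕ → ℤ,
      (∀ i j : ℕ, i + j ≤ n - 1 → c i j = c j i) ∧
      (∀ i j : ℕ, i + j = n → c i j = (-1) ^ j * 2) ∧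
      (∀ i j : ℕ, 1 ≤ i → 1 ≤ j → i + j ≤ n →
        c i j + c (i - 1) j + c i (j - 1) = 0) := by
  obtain ⟨h, hh⟩ := heven
  have hh1 : 1 ≤ h := by omega
  set c : ℕ → ℕ → ℤ := fun i j =>
    if n ≤ i + j then (-1) ^ j * 2
    else (-1) ^ (min i j) *
      (2 * ((h - min i j).choose (n - (i + j)) : ℤ)
        - ((h - 1 - min i j).choose (n - (i + j) - 1) : ℤ)) with hc
  -- symmetry up to level n
  have csymm : ∀ i j : ℕ, i + j ≤ n → c i j = c j i := by
    intro i j hij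
    rcases eq_or_lt_of_le hij with he | hlt
    · simp only [hc]
      rw [if_pos (by omega), if_pos (by omega)]
      have hji : j = n - i := by omega
      subst hji
      have hpar : ((-1 : ℤ)) ^ (n - i) = (-1) ^ i := by
        rcases Nat.even_or_odd i with hi | hi
        · rw [hi.neg_one_pow,
            ((Nat.even_sub (by omega)).mpr (iff_of_true ⟨h, hh⟩ hi)).neg_one_pow]
        · rw [hi.neg_one_pow, (Nat.Even.sub_odd (by omega) ⟨h, hh⟩ hi).neg_one_pow]
      rw [hpar]
    · simp only [hc]
      rw [if_neg (by omega), if_neg (by omega), min_comm, Nat.add_comm j i]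
  refine ⟨c, fun i j hij => csymm i j (by omega), fun i j hij => by
    simp only [hc]; rw [if_pos (by omega)], ?_⟩
  -- main recurrence; first prove it assuming j ≤ i
  have key : ∀ i j : ℕ, 1 ≤ i → 1 ≤ j → i + j ≤ n → j ≤ i →
      c i j + c (i - 1) j + c i (j - 1) = 0 := by
    intro i j hi1 hj1 hijn hji
    obtain ⟨k, rfl⟩ : ∃ k, j = k + 1 := ⟨j - 1, by omega⟩
    rcases eq_or_lt_of_le hijn with htop | hint
    · -- top level i + j = n
      rcases eq_or_lt_of_le hji with heq | hlt
      · -- i = j = h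
        subst heq
        have hih : k + 1 = h := by omega
        subst hih
        simp only [hc]
        rw [if_pos (by omega), if_neg (by omega), if_neg (by omega)]
        rw [min_eq_left (by omega), min_eq_right (by omega)]
        simp only [Nat.add_sub_cancel]
        rw [show n - (k + (k + 1)) = 1 by omega,
            show n - (k + 1 + k) = 1 by omega,
            show k + 1 - k = 1 by omega, show k - k = 0 by omega]
        norm_num [pow_succ]
        ring
      · -- j < i, top
        have hjh : k + 1 < h := by omega
        obtain ⟨q, hq⟩ : ∃ q, h - 1 - (k + 1) = q := ⟨_, rfl⟩
        simp only [hc]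
        rw [if_pos (by omega), if_neg (by omega), if_neg (by omega)]
        rw [min_eq_right (by omega), min_eq_right (by omega)]
        simp only [Nat.add_sub_cancel]
        rw [show n - (i - 1 + (k + 1)) = 1 by omega,
            show n - (i + k) = 1 by omega,
            show h - (k + 1) = q + 1 by omega, hq,
            show h - k = q + 2 by omega, show h - 1 - k = q + 1 by omega]
        rw [show (1:ℕ) - 1 = 0 from rfl]
        simp [Nat.choose_one_right]
        ring
    · -- interior: i + j ≤ n - 1
      rcases eq_or_lt_of_le hji with heq | hlt
      · -- i = j, interior
        subst heq
        obtain ⟨u, hu⟩ : ∃ u, h - (k + 1) = u + 1 := ⟨h - (k+1) - 1, by omega⟩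
        simp only [hc]
        rw [if_neg (by omega), if_neg (by omega), if_neg (by omega)]
        rw [min_self, min_eq_left (by omega), min_eq_right (by omega)]
        simp only [Nat.add_sub_cancel]
        rw [show n - (k + 1 + (k + 1)) = 2 * u + 2 by omega,
            show n - (k + (k + 1)) = 2 * u + 3 by omega,
            show n - (k + 1 + k) = 2 * u + 3 by omega,
            hu, show h - k = u + 2 by omega,
            show h - 1 - (k + 1) = u by omega, show h - 1 - k = u + 1 by omega,
            show 2 * u + 2 - 1 = 2 * u + 1 by omega,
            show 2 * u + 3 - 1 = 2 * u + 2 by omega]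
        rw [Nat.choose_eq_zero_of_lt (by omega), Nat.choose_eq_zero_of_lt (by omega),
            Nat.choose_eq_zero_of_lt (by omega)]
        norm_num
      · -- j < i, interior
        have hjh : k + 1 + 1 ≤ h := by omega
        obtain ⟨q, hq⟩ : ∃ q, h - 1 - (k + 1) = q := ⟨_, rfl⟩
        obtain ⟨t, ht⟩ : ∃ t, n - (i + (k + 1)) = t + 1 := ⟨n - (i + (k+1)) - 1, by omega⟩
        simp only [hc]
        rw [if_neg (by omega), if_neg (by omega), if_neg (by omega)]
        rw [min_eq_right (by omega), min_eq_right (by omega), min_eq_right (by omega)]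
        simp only [Nat.add_sub_cancel]
        rw [ht, show n - (i - 1 + (k + 1)) = t + 2 by omega,
            show n - (i + k) = t + 2 by omega,
            hq, show h - (k + 1) = q + 1 by omega,
            show h - k = q + 2 by omega, show h - 1 - k = q + 1 by omega]
        rw [show t + 1 - 1 = t from rfl, show t + 2 - 1 = t + 1 from rfl]
        have hP1 : (q + 1).choose (t + 1) = q.choose t + q.choose (t + 1) :=
          Nat.choose_succ_succ q t
        have hP2 : (q + 2).choose (t + 2) = (q + 1).choose (t + 1) + (q + 1).choose (t + 2) :=
          Nat.choose_succ_succ (q + 1) (t + 1)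
        push_cast [hP1, hP2]
        ring
  intro i j hi1 hj1 hijn
  rcases le_total j i with hle | hle
  · exact key i j hi1 hj1 hijn hle
  · have e1 := csymm i j hijn
    have e2 := csymm (i - 1) j (by omega)
    have e3 := csymm i (j - 1) (by omega)
    rw [e1, e2, e3]
    have := key j i hj1 hi1 (by omega) hle
    linarith
end

section
/- For every odd integer n ≥ 1 there exists a skew-symmetric solution of the order-n system with c_0 = 1; that is, there exist integers c_{i,j} for i,j ≥ 0 with i + j ≤ n − 1 satisfying c_{i,j} = −c_{j,i} for all i, j (in particular c_{i,i} = 0), such that, setting c_0 = 1 and c_{i,j} = (−1)^j·c_0 whenever i + j = n, one has c_{i,j} + c_{i−1,j} + c_{i,j−1} = 0 for all i, j ≥ 1 with i + j ≤ n. -/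
open Finset

/-- Auxiliary family: `Ff n t i` is the value `d_{i, n-t-i} = (-1)^{n-t-i} c_{i,n-t-i}`
of the solution on level `n - t`, built by repeated partial summation from the
all-ones top level `t = 0`. -/
def Ff (n : ℕ) : ℕ → ℕ → ℤ
  | 0, _ => 1
  | t+1, i => (∑ k ∈ Ioc 0 i, Ff n t k) - ∑ k ∈ Ioc 0 ((n - t - 1) / 2), Ff n t k

/-- Reflection of a sum over `Ioc i (2h-i)` under an antisymmetric function kills it. -/
lemma sum_anti (f : ℕ → ℤ) (h : ℕ) (hf : ∀ k, k ≤ 2*h+2 → f (2*h+2-k) = -f k)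
    (i : ℕ) (hi : i ≤ h) : ∑ k ∈ Ioc i (2*h+1-i), f k = 0 := by
  have key : ∑ k ∈ Ioc i (2*h+1-i), f k = ∑ k ∈ Ioc i (2*h+1-i), -f k := by
    apply Finset.sum_nbij' (fun k => 2*h+2-k) (fun k => 2*h+2-k)
    · intro a ha; simp only [mem_Ioc] at *; omega
    · intro a ha; simp only [mem_Ioc] at *; omega
    · intro a ha; simp only [mem_Ioc] at ha; omega
    · intro a ha; simp only [mem_Ioc] at ha; omega
    · intro a ha; simp only [mem_Ioc] at ha
      rw [hf a (by omega)]; ring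
  rw [Finset.sum_neg_distrib] at key
  linarith

/-- Reflection of a sum over `Ioc i h` under a function symmetric about `(2h+1)/2`. -/
lemma sum_symm (f : ℕ → ℤ) (h : ℕ) (hf : ∀ k, k ≤ 2*h+1 → f (2*h+1-k) = f k)
    (i : ℕ) (hi : i ≤ h) : ∑ k ∈ Ioc h (2*h-i), f k = ∑ k ∈ Ioc i h, f k := by
  apply Finset.sum_nbij' (fun k => 2*h+1-k) (fun k => 2*h+1-k)
  · intro a ha; simp only [mem_Ioc] at *; omega
  · intro a ha; simp only [mem_Ioc] at *; omega
  · intro a ha; simp only [mem_Ioc] at ha; omega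
  · intro a ha; simp only [mem_Ioc] at ha; omega
  · intro a ha; simp only [mem_Ioc] at ha
    have := hf (2*h+1-a) (by omega)
    rw [show 2*h+1-(2*h+1-a) = a by omega] at this
    rw [← this]

lemma Ff_sym (n : ℕ) (hodd : Odd n) :
    ∀ t, t ≤ n → ∀ i, i ≤ n - t → Ff n t (n - t - i) = (-1)^(n - t + 1) * Ff n t i := by
  intro t
  induction t with
  | zero =>
    intro _ i _
    simp only [Ff]
    have : Even (n - 0 + 1) := by
      rcases hodd with ⟨m, hm⟩; exact ⟨m + 1, by omega⟩
    rw [this.neg_one_pow]; ring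
  | succ t ih =>
    intro ht i hi
    have ih' := ih (by omega)
    set L : ℕ := n - (t+1) with hL
    have hnt : n - t = L + 1 := by omega
    have hexp : n - t + 1 = L + 2 := by omega
    -- partial sums of f := Ff n t
    set f : ℕ → ℤ := Ff n t with hfdef
    have hstep : ∀ j, Ff n (t+1) j = (∑ k ∈ Ioc 0 j, f k) - ∑ k ∈ Ioc 0 (L / 2), f k := by
      intro j
      show ((∑ k ∈ Ioc 0 j, Ff n t k) - ∑ k ∈ Ioc 0 ((n - t - 1)/2), Ff n t k) = _
      rw [show n - t - 1 = L by omega]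
    rcases Nat.even_or_odd L with hLe | hLo
    · -- L even, L = 2h : antisymmetric level
      obtain ⟨h, hh⟩ := hLe
      have hh' : L = 2 * h := by omega
      have hdiv : L / 2 = h := by omega
      have hfs : ∀ k, k ≤ 2*h+1 → f (2*h+1-k) = f k := by
        intro k hk
        have := ih' k (by omega)
        rw [hnt] at this
        rw [show L + 1 - k = 2*h+1-k by omega] at this
        rw [this]
        have : Even (L + 1 + 1) := ⟨h+1, by omega⟩
        rw [this.neg_one_pow]; ring
      have key : ∀ i, i ≤ 2*h →
          (∑ k ∈ Ioc 0 (2*h - i), f k) + ∑ k ∈ Ioc 0 i, f k = 2 * ∑ k ∈ Ioc 0 h, f k := by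
        intro j hj
        rcases le_or_gt j h with hjh | hjh
        · have split : (∑ k ∈ Ioc 0 h, f k) + ∑ k ∈ Ioc h (2*h-j), f k
              = ∑ k ∈ Ioc 0 (2*h-j), f k :=
            Finset.sum_Ioc_consecutive _ (by omega) (by omega)
          have split2 : (∑ k ∈ Ioc 0 j, f k) + ∑ k ∈ Ioc j h, f k
              = ∑ k ∈ Ioc 0 h, f k :=
            Finset.sum_Ioc_consecutive _ (by omega) (by omega)
          have hrefl := sum_symm f h hfs j hjh
          linarith
        · have hj2 : 2*h - j ≤ h := by omega
          have split : (∑ k ∈ Ioc 0 h, f k) + ∑ k ∈ Ioc h (2*h-(2*h-j)), f k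
              = ∑ k ∈ Ioc 0 (2*h-(2*h-j)), f k :=
            Finset.sum_Ioc_consecutive _ (by omega) (by omega)
          have split2 : (∑ k ∈ Ioc 0 (2*h-j), f k) + ∑ k ∈ Ioc (2*h-j) h, f k
              = ∑ k ∈ Ioc 0 h, f k :=
            Finset.sum_Ioc_consecutive _ (by omega) (by omega)
          have hrefl := sum_symm f h hfs (2*h-j) hj2
          rw [show 2*h-(2*h-j) = j by omega] at split hrefl
          linarith
      -- goal
      have hne : (-1 : ℤ)^(n - (t+1) + 1) = -1 := by
        have : Odd (L + 1) := ⟨h, by omega⟩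
        rw [← hL, this.neg_one_pow]
      rw [hne, hstep, hstep, hdiv]
      have := key i (by omega)
      rw [show n - (t+1) - i = 2*h - i by omega]
      linarith
    · -- L odd, L = 2h+1 : symmetric level
      obtain ⟨h, hh⟩ := hLo
      have hdiv : L / 2 = h := by omega
      have hfa : ∀ k, k ≤ 2*h+2 → f (2*h+2-k) = -f k := by
        intro k hk
        have := ih' k (by omega)
        rw [hnt] at this
        rw [show L + 1 - k = 2*h+2-k by omega] at this
        rw [this]
        have : Odd (L + 1 + 1) := ⟨h+1, by omega⟩
        rw [this.neg_one_pow]; ring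
      have key : ∀ i, i ≤ 2*h+1 →
          (∑ k ∈ Ioc 0 (2*h+1 - i), f k) = ∑ k ∈ Ioc 0 i, f k := by
        intro j hj
        rcases le_or_gt j h with hjh | hjh
        · have split : (∑ k ∈ Ioc 0 j, f k) + ∑ k ∈ Ioc j (2*h+1-j), f k
              = ∑ k ∈ Ioc 0 (2*h+1-j), f k :=
            Finset.sum_Ioc_consecutive _ (by omega) (by omega)
          have z := sum_anti f h hfa j hjh
          linarith
        · have hj2 : 2*h+1-j ≤ h := by omega
          have split : (∑ k ∈ Ioc 0 (2*h+1-j), f k) + ∑ k ∈ Ioc (2*h+1-j) (2*h+1-(2*h+1-j)), f k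
              = ∑ k ∈ Ioc 0 (2*h+1-(2*h+1-j)), f k :=
            Finset.sum_Ioc_consecutive _ (by omega) (by omega)
          have z := sum_anti f h hfa (2*h+1-j) hj2
          rw [show 2*h+1-(2*h+1-j) = j by omega] at split z
          linarith
      have hpe : (-1 : ℤ)^(n - (t+1) + 1) = 1 := by
        have : Even (L + 1) := ⟨h+1, by omega⟩
        rw [← hL, this.neg_one_pow]
      rw [hpe, hstep, hstep, hdiv, one_mul]
      rw [show n - (t+1) - i = 2*h+1 - i by omega]
      rw [key i (by omega)]

lemma Ff_diff (n t i : ℕ) (hi : 1 ≤ i) :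
    Ff n (t+1) i - Ff n (t+1) (i-1) = Ff n t i := by
  show ((∑ k ∈ Ioc 0 i, Ff n t k) - _) - ((∑ k ∈ Ioc 0 (i-1), Ff n t k) - _) = _
  have : (∑ k ∈ Ioc 0 (i-1), Ff n t k) + ∑ k ∈ Ioc (i-1) i, Ff n t k
      = ∑ k ∈ Ioc 0 i, Ff n t k :=
    Finset.sum_Ioc_consecutive _ (by omega) (by omega)
  have hset : Ioc (i-1) i = {i} := by
    ext k; simp only [mem_Ioc, Finset.mem_singleton]; omega
  have hsing : ∑ k ∈ Ioc (i-1) i, Ff n t k = Ff n t i := by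
    rw [hset, Finset.sum_singleton]
  linarith

/-- for every odd `n ≥ 1` the order-`n` system has a
skew-symmetric solution with `c₀ = 1`: there are integers `c i j`,
skew-symmetric in `i, j` in degrees `≤ n - 1` (in particular `c i i = 0`),
taking the value `(-1)^j · 1` whenever `i + j = n`, and satisfying
`c i j + c (i-1) j + c i (j-1) = 0` for all `i, j ≥ 1` with `i + j ≤ n`. -/
theorem stmt11 (n : ℕ) (hn : 1 ≤ n) (hodd : Odd n) :
    ∃ c : ℕ → ℕ → ℤ,
      (∀ i j : ℕ, i + j ≤ n - 1 → c i j = -c j i) ∧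
      (∀ i j : ℕ, i + j = n → c i j = (-1) ^ j * 1) ∧
      (∀ i j : ℕ, 1 ≤ i → 1 ≤ j → i + j ≤ n →
        c i j + c (i - 1) j + c i (j - 1) = 0) := by
  refine ⟨fun i j => (-1)^j * Ff n (n - (i+j)) i, ?_, ?_, ?_⟩
  · -- skew-symmetry
    intro i j hij
    show (-1:ℤ)^j * Ff n (n - (i+j)) i = -((-1:ℤ)^i * Ff n (n - (j+i)) j)
    set t : ℕ := n - (i+j) with ht
    have hcomm : n - (j+i) = t := by omega
    rw [hcomm]
    have hsym := Ff_sym n hodd t (by omega) i (by omega)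
    rw [show n - t - i = j by omega] at hsym
    rw [hsym]
    have hexp : i + (n - t + 1) = (j + 1) + 2 * i := by omega
    have h2 : (-1:ℤ)^i * (-1)^(n-t+1) = -(-1)^j := by
      rw [← pow_add, hexp, pow_add, pow_mul, neg_one_sq, one_pow, mul_one, pow_succ]
      ring
    linear_combination (Ff n t i) * h2
  · -- top values
    intro i j hij
    show (-1:ℤ)^j * Ff n (n - (i+j)) i = (-1)^j * 1
    rw [hij, Nat.sub_self]
    rfl
  · -- recurrence
    intro i j hi hj hij
    show (-1:ℤ)^j * Ff n (n - (i+j)) i + (-1:ℤ)^j * Ff n (n - ((i-1)+j)) (i-1)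
        + (-1:ℤ)^(j-1) * Ff n (n - (i+(j-1))) i = 0
    set t : ℕ := n - (i+j) with ht
    have h1 : n - ((i-1)+j) = t + 1 := by omega
    have h2 : n - (i+(j-1)) = t + 1 := by omega
    rw [h1, h2]
    have hd := Ff_diff n t i hi
    have hsign : (-1:ℤ)^(j-1) * (-1) = (-1)^j := by
      rw [← pow_succ]
      congr 1
      omega
    have hs2 : (-1:ℤ)^(j-1) = -(-1)^j := by linarith [hsign]
    rw [hs2]
    linear_combination (-(-1:ℤ)^j) * hd
end

section
/- Let n ≥ 2 be an even integer. Define c_0 = 2 and, for 0 ≤ a ≤ n − 1, define c_{a, n−1−a} = (−1)^a·(n − 1 − 2a). Then this family is symmetric, i.e. c_{a, n−1−a} = c_{n−1−a, a} for all 0 ≤ a ≤ n − 1, and it solves all the TOP equations: (−1)^i·c_0 + c_{n−1−i, i} + c_{n−i, i−1} = 0 for every i with 1 ≤ i ≤ n − 1. -/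
/-- for even `n ≥ 2`, the family `c₀ = 2`,
`c (a) (n-1-a) = (-1)^a · (n - 1 - 2a)` is symmetric and solves all the TOP
equations `(-1)^i · c₀ + c (n-1-i) (i) + c (n-i) (i-1) = 0` for
`1 ≤ i ≤ n - 1`.  Here `f a` denotes the value `c (a) (n-1-a)`. -/
theorem stmt12 (n : ℕ) (hn : 2 ≤ n) (heven : Even n) :
    let f : ℕ → ℤ := fun a => (-1 : ℤ) ^ a * ((n : ℤ) - 1 - 2 * (a : ℤ))
    (∀ a : ℕ, a ≤ n - 1 → f a = f (n - 1 - a)) ∧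
    (∀ i : ℕ, 1 ≤ i → i ≤ n - 1 →
      (-1 : ℤ) ^ i * 2 + f (n - 1 - i) + f (n - i) = 0) := by
  intro f
  have hodd : Odd (n - 1) := Nat.Even.sub_odd (by omega) heven odd_one
  have hpow : (-1 : ℤ) ^ (n - 1) = -1 := hodd.neg_one_pow
  have hpn : (-1 : ℤ) ^ n = 1 := heven.neg_one_pow
  constructor
  · intro a ha
    have hsq : (-1 : ℤ) ^ a * (-1) ^ a = 1 := by
      rw [← pow_add]; exact Even.neg_one_pow ⟨a, rfl⟩
    have h1 : (-1 : ℤ) ^ (n - 1 - a) * (-1) ^ a = -1 := by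
      rw [← pow_add, Nat.sub_add_cancel ha, hpow]
    have h2 : (-1 : ℤ) ^ (n - 1 - a) = -(-1) ^ a := by
      calc (-1 : ℤ) ^ (n - 1 - a)
          = (-1) ^ (n - 1 - a) * ((-1) ^ a * (-1) ^ a) := by rw [hsq, mul_one]
        _ = ((-1) ^ (n - 1 - a) * (-1) ^ a) * (-1) ^ a := by ring
        _ = -(-1) ^ a := by rw [h1]; ring
    have e1 : ((n - 1 - a : ℕ) : ℤ) = (n : ℤ) - 1 - a := by omega
    simp only [f, e1, h2]
    ring
  · intro i hi1 hi2
    have hsq : (-1 : ℤ) ^ i * (-1) ^ i = 1 := by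
      rw [← pow_add]; exact Even.neg_one_pow ⟨i, rfl⟩
    have h1 : (-1 : ℤ) ^ (n - 1 - i) * (-1) ^ i = -1 := by
      rw [← pow_add, Nat.sub_add_cancel hi2, hpow]
    have h2 : (-1 : ℤ) ^ (n - 1 - i) = -(-1) ^ i := by
      calc (-1 : ℤ) ^ (n - 1 - i)
          = (-1) ^ (n - 1 - i) * ((-1) ^ i * (-1) ^ i) := by rw [hsq, mul_one]
        _ = ((-1) ^ (n - 1 - i) * (-1) ^ i) * (-1) ^ i := by ring
        _ = -(-1) ^ i := by rw [h1]; ring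
    have h3 : (-1 : ℤ) ^ (n - i) * (-1) ^ i = 1 := by
      rw [← pow_add, Nat.sub_add_cancel (by omega), hpn]
    have h4 : (-1 : ℤ) ^ (n - i) = (-1) ^ i := by
      calc (-1 : ℤ) ^ (n - i)
          = (-1) ^ (n - i) * ((-1) ^ i * (-1) ^ i) := by rw [hsq, mul_one]
        _ = ((-1) ^ (n - i) * (-1) ^ i) * (-1) ^ i := by ring
        _ = (-1) ^ i := by rw [h3]; ring
    have e1 : ((n - 1 - i : ℕ) : ℤ) = (n : ℤ) - 1 - i := by omega
    have e2 : ((n - i : ℕ) : ℤ) = (n : ℤ) - i := by omega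
    simp only [f, e1, e2, h2, h4]
    ring
end

section
/- Let n ≥ 1 be an odd integer and set m = (n − 1)/2. Define c_0 = 1 and, for 0 ≤ a ≤ n − 1, define c_{a, n−1−a} = (−1)^{n−1−a}·(a − m). Then this family is skew-symmetric, i.e. c_{a, n−1−a} = −c_{n−1−a, a} for all 0 ≤ a ≤ n − 1, with c_{m,m} = 0, and it solves all the TOP equations: (−1)^i·c_0 + c_{n−1−i, i} + c_{n−i, i−1} = 0 for every i with 1 ≤ i ≤ n − 1. -/
private lemma negOnePowEq (p q : ℕ) (h : Even (p + q)) : (-1 : ℤ) ^ p = (-1) ^ q := by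
  rcases Nat.even_or_odd p with hp | hp
  · have hq : Even q := by rw [Nat.even_add] at h; tauto
    rw [hp.neg_one_pow, hq.neg_one_pow]
  · have hq : Odd q := by
      rw [Nat.even_add] at h; rcases Nat.even_or_odd q with h'|h' <;> simp_all [← Nat.not_odd_iff_even]
    rw [hp.neg_one_pow, hq.neg_one_pow]

/-- for odd `n ≥ 1` with `m = (n-1)/2`, the family `c₀ = 1`,
`c (a) (n-1-a) = (-1)^(n-1-a) · (a - m)` is skew-symmetric with `c m m = 0` and
solves all the TOP equations `(-1)^i · c₀ + c (n-1-i) (i) + c (n-i) (i-1) = 0`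
for `1 ≤ i ≤ n - 1`.  Here `f a` denotes the value `c (a) (n-1-a)`. -/
theorem stmt13 (n : ℕ) (hn : 1 ≤ n) (hodd : Odd n) :
    let m : ℕ := (n - 1) / 2
    let f : ℕ → ℤ := fun a => (-1 : ℤ) ^ (n - 1 - a) * ((a : ℤ) - (m : ℤ))
    (∀ a : ℕ, a ≤ n - 1 → f a = -f (n - 1 - a)) ∧
    f m = 0 ∧
    (∀ i : ℕ, 1 ≤ i → i ≤ n - 1 →
      (-1 : ℤ) ^ i * 1 + f (n - 1 - i) + f (n - i) = 0) := by
  intro m f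
  obtain ⟨k, hk⟩ := hodd
  have hm : m = k := by omega
  refine ⟨?_, ?_, ?_⟩
  · intro a ha
    show (-1:ℤ)^(n-1-a) * ((a:ℤ) - m) = -((-1:ℤ)^(n-1-(n-1-a)) * (((n-1-a:ℕ):ℤ) - m))
    have h1 : n - 1 - (n - 1 - a) = a := by omega
    have h2 : ((n-1-a : ℕ) : ℤ) = 2*k - a := by omega
    have h3 : (-1:ℤ)^(n-1-a) = (-1)^a := negOnePowEq _ _ ⟨k, by omega⟩
    rw [h1, h2, h3, hm]
    push_cast
    ring
  · show (-1:ℤ)^(n-1-m) * ((m:ℤ) - m) = 0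
    simp
  · intro i hi1 hi2
    show (-1:ℤ)^i * 1 + (-1:ℤ)^(n-1-(n-1-i)) * (((n-1-i:ℕ):ℤ) - m)
        + (-1:ℤ)^(n-1-(n-i)) * (((n-i:ℕ):ℤ) - m) = 0
    have h1 : n - 1 - (n - 1 - i) = i := by omega
    have h2 : n - 1 - (n - i) = i - 1 := by omega
    have h3 : ((n-1-i : ℕ) : ℤ) = 2*k - i := by omega
    have h4 : ((n-i : ℕ) : ℤ) = 2*k + 1 - i := by omega
    rw [h1, h2, h3, h4, hm, show i = (i-1)+1 by omega]
    have h6 : ((i - 1 + 1 : ℕ) : ℤ) = (i - 1 : ℕ) + 1 := by push_cast; ring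
    rw [h6, pow_succ]
    simp only [Nat.add_sub_cancel]
    ring
end

section
/- Let n1, n2 ≥ 1 be integers. Suppose (c_0, c_{i,j}) is a solution of the order-n1 system and (d_0, d_{k,l}) is a solution of the order-n2 system, each extended to top degree by c_{i,j} = (−1)^j·c_0 for i + j = n1 and d_{k,l} = (−1)^l·d_0 for k + l = n2. Define e_{i,j,k,l} = c_{i,j}·d_{k,l} for all i + j ≤ n1 and k + l ≤ n2. Then: (1) e_{i,j,k,l} = (−1)^{j+l}·c_0·d_0 whenever i + j = n1 and k + l = n2; (2) e_{i,j,k,l} + e_{i−1,j,k,l} + e_{i,j−1,k,l} = 0 for all i, j ≥ 1 with i + j ≤ n1 and all k, l ≥ 0 with k + l ≤ n2; and (3) e_{i,j,k,l} + e_{i,j,k−1,l} + e_{i,j,k,l−1} = 0 for all k, l ≥ 1 with k + l ≤ n2 and all i, j ≥ 0 with i + j ≤ n1. (Thus the product of a combinatorial parity formula generated by R^{n1} and one generated by L^{n2} is a combinatorial parity formula generated by R^{n1}L^{n2}.) -/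
/-- the product of a solution of the order-`n₁` system and a
solution of the order-`n₂` system, `e i j k l = c i j · d k l`, satisfies the
top-degree normalization and both families of second-Reidemeister-move
equations.  (The product of a combinatorial parity formula generated by
`R^{n₁}` and one generated by `L^{n₂}` is a combinatorial parity formula
generated by `R^{n₁} L^{n₂}`.) -/
theorem stmt14 (n1 n2 : ℕ) (h1 : 1 ≤ n1) (h2 : 1 ≤ n2)
    (c0 d0 : ℤ) (c d : ℕ → ℕ → ℤ)
    (hctop : ∀ i j : ℕ, i + j = n1 → c i j = (-1) ^ j * c0)
    (hcbot : ∀ i j : ℕ, 1 ≤ i → 1 ≤ j → i + j ≤ n1 →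
      c i j + c (i - 1) j + c i (j - 1) = 0)
    (hdtop : ∀ k l : ℕ, k + l = n2 → d k l = (-1) ^ l * d0)
    (hdbot : ∀ k l : ℕ, 1 ≤ k → 1 ≤ l → k + l ≤ n2 →
      d k l + d (k - 1) l + d k (l - 1) = 0) :
    (∀ i j k l : ℕ, i + j = n1 → k + l = n2 →
      c i j * d k l = (-1) ^ (j + l) * (c0 * d0)) ∧
    (∀ i j k l : ℕ, 1 ≤ i → 1 ≤ j → i + j ≤ n1 → k + l ≤ n2 →
      c i j * d k l + c (i - 1) j * d k l + c i (j - 1) * d k l = 0) ∧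
    (∀ i j k l : ℕ, 1 ≤ k → 1 ≤ l → k + l ≤ n2 → i + j ≤ n1 →
      c i j * d k l + c i j * d (k - 1) l + c i j * d k (l - 1) = 0) := by
  refine ⟨fun i j k l hij hkl => ?_, fun i j k l hi hj hij hkl => ?_,
    fun i j k l hk hl hkl hij => ?_⟩
  · rw [hctop i j hij, hdtop k l hkl, pow_add]; ring
  · have := hcbot i j hi hj hij
    have : (c i j + c (i - 1) j + c i (j - 1)) * d k l = 0 := by rw [this]; ring
    linarith [this, (by ring : (c i j + c (i - 1) j + c i (j - 1)) * d k l
      = c i j * d k l + c (i - 1) j * d k l + c i (j - 1) * d k l)]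
  · have := hdbot k l hk hl hkl
    have : c i j * (d k l + d (k - 1) l + d k (l - 1)) = 0 := by rw [this]; ring
    linarith [this, (by ring : c i j * (d k l + d (k - 1) l + d k (l - 1))
      = c i j * d k l + c i j * d (k - 1) l + c i j * d k (l - 1))]
end

section
/- For every integer k ≥ 1, the (3k+1) × (3k+1) integer block matrix M_k with block rows [S_k, Z_k, I_k], [L_k, T_k, Z_k], [Z_{k+1}, E_k, J_k] has rank 3k+1; equivalently, M_k is invertible as a matrix over ℚ. -/
/-- The `(3k+1) × (3k+1)` block matrix `M_k` with block rows
`[S_k, Z_k, I_k]`, `[L_k, T_k, Z_k]`, `[Z_{k+1}, E_k, J_k]` (indices of the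
blocks are 0-based here; the defining conditions are translated from the
1-based description).  Block rows are indexed by `Fin k ⊕ (Fin k ⊕ Fin (k+1))`
and block columns by `Fin (k+1) ⊕ (Fin k ⊕ Fin k)`. -/
def evenBlockMatrix (k : ℕ) :
    Matrix (Fin k ⊕ (Fin k ⊕ Fin (k + 1))) (Fin (k + 1) ⊕ (Fin k ⊕ Fin k)) ℤ :=
  Matrix.of fun r c =>
    match r, c with
    -- S_k : (S_k)_{p,q} = 1 iff q = p or q = p + 1
    | Sum.inl p, Sum.inl q =>
        if (q : ℕ) = (p : ℕ) ∨ (q : ℕ) = (p : ℕ) + 1 then 1 else 0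
    -- Z_k
    | Sum.inl _, Sum.inr (Sum.inl _) => 0
    -- I_k
    | Sum.inl p, Sum.inr (Sum.inr q) => if (p : ℕ) = (q : ℕ) then 1 else 0
    -- L_k : (L_k)_{p,p+1} = 1
    | Sum.inr (Sum.inl p), Sum.inl q => if (q : ℕ) = (p : ℕ) + 1 then 1 else 0
    -- T_k : diagonal 1 except last diagonal entry 2; superdiagonal 1
    | Sum.inr (Sum.inl p), Sum.inr (Sum.inl q) =>
        if (p : ℕ) = (q : ℕ) then (if (p : ℕ) = k - 1 then 2 else 1)
        else if (q : ℕ) = (p : ℕ) + 1 then 1 else 0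
    -- Z_k
    | Sum.inr (Sum.inl _), Sum.inr (Sum.inr _) => 0
    -- Z_{k+1}
    | Sum.inr (Sum.inr _), Sum.inl _ => 0
    -- E_k : only nonzero entry is a 1 in the (1-based) position (k+1, k)
    | Sum.inr (Sum.inr p), Sum.inr (Sum.inl q) =>
        if (p : ℕ) = k ∧ (q : ℕ) = k - 1 then 1 else 0
    -- J_k : (J_k)_{p,p} = 1 for 1 ≤ p ≤ k
    | Sum.inr (Sum.inr p), Sum.inr (Sum.inr q) =>
        if (p : ℕ) = (q : ℕ) then 1 else 0

open Sum

lemma sum_fin_ite {n m : ℕ} (v : Fin n → ℚ) :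
    (∑ q : Fin n, if (q : ℕ) = m then v q else 0) =
      if h : m < n then v ⟨m, h⟩ else 0 := by
  split
  · next h =>
    rw [Finset.sum_eq_single (⟨m, h⟩ : Fin n)]
    · simp
    · intro q _ hq
      rw [if_neg]
      intro hc; exact hq (Fin.ext hc)
    · simp
  · next h =>
    apply Finset.sum_eq_zero
    intro q _
    rw [if_neg]
    omega

lemma evenKerAux (k : ℕ) (hk : 1 ≤ k)
    (x : (Fin (k + 1) ⊕ (Fin k ⊕ Fin k)) → ℚ)
    (hx : ((Matrix.of fun r c =>
    match r, c with
    | Sum.inl p, Sum.inl q =>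
        if (q : ℕ) = (p : ℕ) ∨ (q : ℕ) = (p : ℕ) + 1 then 1 else 0
    | Sum.inl _, Sum.inr (Sum.inl _) => 0
    | Sum.inl p, Sum.inr (Sum.inr q) => if (p : ℕ) = (q : ℕ) then 1 else 0
    | Sum.inr (Sum.inl p), Sum.inl q => if (q : ℕ) = (p : ℕ) + 1 then 1 else 0
    | Sum.inr (Sum.inl p), Sum.inr (Sum.inl q) =>
        if (p : ℕ) = (q : ℕ) then (if (p : ℕ) = k - 1 then 2 else 1)
        else if (q : ℕ) = (p : ℕ) + 1 then 1 else 0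
    | Sum.inr (Sum.inl _), Sum.inr (Sum.inr _) => 0
    | Sum.inr (Sum.inr _), Sum.inl _ => 0
    | Sum.inr (Sum.inr p), Sum.inr (Sum.inl q) =>
        if (p : ℕ) = k ∧ (q : ℕ) = k - 1 then 1 else 0
    | Sum.inr (Sum.inr p), Sum.inr (Sum.inr q) =>
        if (p : ℕ) = (q : ℕ) then 1 else 0 :
      Matrix (Fin k ⊕ (Fin k ⊕ Fin (k + 1))) (Fin (k + 1) ⊕ (Fin k ⊕ Fin k)) ℚ).mulVec x) = 0) :
    x = 0 := by
  set A : ℕ → ℚ := fun m => if h : m < k + 1 then x (inl ⟨m, h⟩) else 0 with hA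
  set B : ℕ → ℚ := fun m => if h : m < k then x (inr (inl ⟨m, h⟩)) else 0 with hB
  set C : ℕ → ℚ := fun m => if h : m < k then x (inr (inr ⟨m, h⟩)) else 0 with hC
  -- equation from the first block row
  have E1 : ∀ p : Fin k, A (p : ℕ) + A ((p : ℕ) + 1) + C (p : ℕ) = 0 := by
    intro p
    have h := congrFun hx (inl p)
    simp only [Matrix.mulVec, Matrix.of_apply, dotProduct, Fintype.sum_sum_type,
      Pi.zero_apply, ite_mul, one_mul, zero_mul, Finset.sum_const_zero, add_zero,
      zero_add] at h
    have hsplit : ∀ q : Fin (k + 1),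
        (if (q : ℕ) = (p : ℕ) ∨ (q : ℕ) = (p : ℕ) + 1 then x (inl q) else 0)
          = (if (q : ℕ) = (p : ℕ) then x (inl q) else 0)
            + (if (q : ℕ) = (p : ℕ) + 1 then x (inl q) else 0) := by
      intro q
      split_ifs <;> first | (exfalso; omega) | ring1
    have hflip : ∀ q : Fin k,
        (if (p : ℕ) = (q : ℕ) then x (inr (inr q)) else 0)
          = (if (q : ℕ) = (p : ℕ) then x (inr (inr q)) else 0) := by
      intro q
      split_ifs <;> first | (exfalso; omega) | ring1
    rw [Finset.sum_congr rfl (fun q _ => hsplit q), Finset.sum_add_distrib,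
      Finset.sum_congr rfl (fun q _ => hflip q),
      sum_fin_ite, sum_fin_ite, sum_fin_ite] at h
    rw [hA, hC]
    simp only []
    rw [dif_pos (show (p : ℕ) < k + 1 by omega), dif_pos (show (p : ℕ) + 1 < k + 1 by omega),
      dif_pos (show (p : ℕ) < k from p.isLt)] at h ⊢
    linarith [h]
  -- equation from the second block row
  have E2 : ∀ p : Fin k,
      A ((p : ℕ) + 1) + (if (p : ℕ) = k - 1 then 2 else 1) * B (p : ℕ)
        + B ((p : ℕ) + 1) = 0 := by
    intro p
    have h := congrFun hx (inr (inl p))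
    simp only [Matrix.mulVec, Matrix.of_apply, dotProduct, Fintype.sum_sum_type,
      Pi.zero_apply, ite_mul, one_mul, zero_mul, Finset.sum_const_zero, add_zero,
      zero_add] at h
    have hsplit : ∀ q : Fin k,
        (if (p : ℕ) = (q : ℕ) then
            (if (p : ℕ) = k - 1 then 2 * x (inr (inl q)) else x (inr (inl q)))
          else if (q : ℕ) = (p : ℕ) + 1 then x (inr (inl q)) else 0)
          = (if (q : ℕ) = (p : ℕ) then
              (if (p : ℕ) = k - 1 then (2:ℚ) else 1) * x (inr (inl q)) else 0)
            + (if (q : ℕ) = (p : ℕ) + 1 then x (inr (inl q)) else 0) := by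
      intro q
      split_ifs <;> first | (exfalso; omega) | ring1
    rw [Finset.sum_congr rfl (fun q _ => hsplit q), Finset.sum_add_distrib,
      sum_fin_ite, sum_fin_ite, sum_fin_ite] at h
    rw [hA, hB]
    simp only []
    rw [dif_pos (show (p : ℕ) + 1 < k + 1 by omega),
      dif_pos (show (p : ℕ) < k from p.isLt)] at h ⊢
    by_cases hb : (p : ℕ) + 1 < k
    · rw [dif_pos hb] at h ⊢
      linarith [h]
    · rw [dif_neg hb] at h ⊢
      linarith [h]
  -- equations from the third block row
  have E3 : ∀ p : Fin (k + 1),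
      (if (p : ℕ) = k then B (k - 1) else 0) + C (p : ℕ) = 0 := by
    intro p
    have h := congrFun hx (inr (inr p))
    simp only [Matrix.mulVec, Matrix.of_apply, dotProduct, Fintype.sum_sum_type,
      Pi.zero_apply, ite_mul, one_mul, zero_mul, Finset.sum_const_zero, add_zero,
      zero_add] at h
    rw [hB, hC]
    simp only []
    by_cases hp : (p : ℕ) = k
    · have h1 : ∀ q : Fin k,
          (if (p : ℕ) = k ∧ (q : ℕ) = k - 1 then x (inr (inl q)) else 0)
            = (if (q : ℕ) = k - 1 then x (inr (inl q)) else 0) := by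
        intro q
        split_ifs <;> first | (exfalso; omega) | ring1
      have h2 : ∀ q : Fin k,
          (if (p : ℕ) = (q : ℕ) then x (inr (inr q)) else 0) = 0 := by
        intro q
        rw [if_neg]
        omega
      rw [Finset.sum_congr rfl (fun q _ => h1 q), Finset.sum_congr rfl (fun q _ => h2 q),
        Finset.sum_const_zero, add_zero, sum_fin_ite] at h
      rw [dif_pos (show k - 1 < k by omega)] at h
      rw [if_pos hp, dif_pos (show k - 1 < k by omega),
        dif_neg (show ¬ (p : ℕ) < k by omega)]
      linarith [h]
    · have h1 : ∀ q : Fin k,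
          (if (p : ℕ) = k ∧ (q : ℕ) = k - 1 then x (inr (inl q)) else 0) = 0 := by
        intro q
        rw [if_neg]
        tauto
      have hflip : ∀ q : Fin k,
          (if (p : ℕ) = (q : ℕ) then x (inr (inr q)) else 0)
            = (if (q : ℕ) = (p : ℕ) then x (inr (inr q)) else 0) := by
        intro q
        split_ifs <;> first | (exfalso; omega) | ring1
      rw [Finset.sum_congr rfl (fun q _ => h1 q), Finset.sum_congr rfl (fun q _ => hflip q),
        Finset.sum_const_zero, zero_add, sum_fin_ite] at h
      rw [if_neg hp, zero_add, dif_pos (show (p : ℕ) < k by omega)]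
      rw [dif_pos (show (p : ℕ) < k by omega)] at h
      linarith [h]
  -- C vanishes
  have hCzero : ∀ m, C m = 0 := by
    intro m
    by_cases hm : m < k
    · have := E3 ⟨m, by omega⟩
      rw [if_neg (by simp; omega)] at this
      simpa using this
    · rw [hC]; exact dif_neg hm
  -- B (k-1) = 0
  have hBk : B (k - 1) = 0 := by
    have := E3 ⟨k, by omega⟩
    rw [if_pos rfl] at this
    have hc : C k = 0 := hCzero k
    simp only [Fin.val_mk] at this
    linarith [this, hc]
  -- B m = 0 for m ≥ k by definition
  have hBtop : ∀ m, k ≤ m → B m = 0 := by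
    intro m hm; rw [hB]; exact dif_neg (by omega)
  -- A k = 0
  have hAk : A k = 0 := by
    have := E2 ⟨k - 1, by omega⟩
    simp only [Fin.val_mk, if_true] at this
    have h1 : B k = 0 := hBtop _ le_rfl
    have h2 : k - 1 + 1 = k := by omega
    rw [h2] at this
    linarith [this, hBk, h1]
  -- all A vanish, by downward induction
  have hAdown : ∀ m, A (k - m) = 0 := by
    intro m
    induction m with
    | zero => simpa using hAk
    | succ n ih =>
      by_cases hn : n + 1 ≤ k
      · have hi : k - n - 1 < k := by omega
        have := E1 ⟨k - n - 1, hi⟩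
        simp only [Fin.val_mk] at this
        have he : k - n - 1 + 1 = k - n := by omega
        rw [he] at this
        have h2 : k - (n + 1) = k - n - 1 := by omega
        rw [h2]
        have := this
        rw [ih, hCzero] at this
        linarith [this]
      · have h2 : k - (n + 1) = k - n := by omega
        rw [h2]; exact ih
  have hAzero : ∀ m, A m = 0 := by
    intro m
    by_cases hm : m < k + 1
    · have := hAdown (k - m)
      rw [show k - (k - m) = m by omega] at this
      exact this
    · rw [hA]; exact dif_neg hm
  -- all B vanish, by downward induction
  have hBdown : ∀ m, B (k - 1 - m) = 0 := by
    intro m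
    induction m with
    | zero => simpa using hBk
    | succ n ih =>
      by_cases hn : n + 1 ≤ k - 1
      · have hi : k - 1 - n - 1 < k := by omega
        have := E2 ⟨k - 1 - n - 1, hi⟩
        simp only [Fin.val_mk] at this
        rw [if_neg (by omega)] at this
        have he : k - 1 - n - 1 + 1 = k - 1 - n := by omega
        rw [he] at this
        have h2 : k - 1 - (n + 1) = k - 1 - n - 1 := by omega
        rw [h2]
        rw [ih, hAzero] at this
        linarith [this]
      · have h2 : k - 1 - (n + 1) = k - 1 - n := by omega
        rw [h2]; exact ih
  have hBzero : ∀ m, B m = 0 := by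
    intro m
    by_cases hm : m < k
    · have := hBdown (k - 1 - m)
      rw [show k - 1 - (k - 1 - m) = m by omega] at this
      exact this
    · rw [hB]; exact dif_neg (by omega)
  -- conclude
  funext r
  rcases r with p | p | p
  · have := hAzero (p : ℕ)
    simp only [hA] at this
    rw [dif_pos p.isLt] at this
    exact this
  · have := hBzero (p : ℕ)
    simp only [hB] at this
    rw [dif_pos p.isLt] at this
    exact this
  · have := hCzero (p : ℕ)
    simp only [hC] at this
    rw [dif_pos p.isLt] at this
    exact this

lemma evenBlockMatrix_map (k : ℕ) :
    (evenBlockMatrix k).map ((↑) : ℤ → ℚ) = (Matrix.of fun r c =>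
    match r, c with
    | Sum.inl p, Sum.inl q =>
        if (q : ℕ) = (p : ℕ) ∨ (q : ℕ) = (p : ℕ) + 1 then 1 else 0
    | Sum.inl _, Sum.inr (Sum.inl _) => 0
    | Sum.inl p, Sum.inr (Sum.inr q) => if (p : ℕ) = (q : ℕ) then 1 else 0
    | Sum.inr (Sum.inl p), Sum.inl q => if (q : ℕ) = (p : ℕ) + 1 then 1 else 0
    | Sum.inr (Sum.inl p), Sum.inr (Sum.inl q) =>
        if (p : ℕ) = (q : ℕ) then (if (p : ℕ) = k - 1 then 2 else 1)
        else if (q : ℕ) = (p : ℕ) + 1 then 1 else 0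
    | Sum.inr (Sum.inl _), Sum.inr (Sum.inr _) => 0
    | Sum.inr (Sum.inr _), Sum.inl _ => 0
    | Sum.inr (Sum.inr p), Sum.inr (Sum.inl q) =>
        if (p : ℕ) = k ∧ (q : ℕ) = k - 1 then 1 else 0
    | Sum.inr (Sum.inr p), Sum.inr (Sum.inr q) =>
        if (p : ℕ) = (q : ℕ) then 1 else 0 :
      Matrix (Fin k ⊕ (Fin k ⊕ Fin (k + 1))) (Fin (k + 1) ⊕ (Fin k ⊕ Fin k)) ℚ) := by
  funext r c
  rcases r with p | p | p <;> rcases c with q | q | q <;>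
    simp [evenBlockMatrix, Matrix.map_apply, apply_ite ((↑) : ℤ → ℚ)]

/-- for every `k ≥ 1`, the block matrix `M_k` has rank `3k + 1`
over `ℚ`; equivalently, it is invertible as a matrix over `ℚ`. -/
theorem stmt15 (k : ℕ) (hk : 1 ≤ k) :
    ((evenBlockMatrix k).map ((↑) : ℤ → ℚ)).rank = 3 * k + 1 := by
  have hinj : Function.Injective ((evenBlockMatrix k).map ((↑) : ℤ → ℚ)).mulVecLin := by
    rw [← LinearMap.ker_eq_bot, LinearMap.ker_eq_bot']
    intro x hx0
    refine evenKerAux k hk x ?_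
    rw [← evenBlockMatrix_map k]
    simpa [Matrix.mulVecLin_apply] using hx0
  rw [Matrix.rank, LinearMap.finrank_range_of_inj hinj]
  simp [Module.finrank_pi, Fintype.card_sum, Fintype.card_fin]
  ring
end

section
/- For every integer j ≥ 2, the (3j−2) × (3j−2) integer block matrix M_j with block rows [S_{j−1}, Z_{j−1}, I_{j−1}], [L_{j−1}, T_{j−1}, Z_{j−1}], [H_j, Y_j, J_{j−1}] has rank 3j−2; equivalently, M_j is invertible as a matrix over ℚ. -/
private lemma sum_ind {n k : ℕ} (f : Fin n → ℚ) :
    ∑ q : Fin n, (if (q : ℕ) = k then (1:ℚ) else 0) * f q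
      = if h : k < n then f ⟨k, h⟩ else 0 := by
  split_ifs with h
  · rw [Finset.sum_eq_single ⟨k, h⟩]
    · simp
    · intro q _ hq
      have : (q:ℕ) ≠ k := fun hc => hq (Fin.ext hc)
      simp [this]
    · simp
  · apply Finset.sum_eq_zero
    intro q _
    have hq := q.isLt
    have : (q : ℕ) ≠ k := by omega
    simp [this]

private lemma sum_ind' {n k : ℕ} (f : Fin n → ℚ) :
    ∑ q : Fin n, (if k = (q : ℕ) then (1:ℚ) else 0) * f q
      = if h : k < n then f ⟨k, h⟩ else 0 := by
  rw [← sum_ind f]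
  congr 1; funext q
  congr 1
  simp [eq_comm]



/-- The `(3j-2) × (3j-2)` block matrix `M_j` with block rows
`[S_{j-1}, Z_{j-1}, I_{j-1}]`, `[L_{j-1}, T_{j-1}, Z_{j-1}]`,
`[H_j, Y_j, J_{j-1}]` (indices of the blocks are 0-based here; the defining
conditions are translated from the 1-based description).  Block rows are
indexed by `Fin (j-1) ⊕ (Fin (j-1) ⊕ Fin j)` and block columns by
`Fin j ⊕ (Fin (j-1) ⊕ Fin (j-1))`. -/
def oddBlockMatrix (j : ℕ) :
    Matrix (Fin (j - 1) ⊕ (Fin (j - 1) ⊕ Fin j))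
      (Fin j ⊕ (Fin (j - 1) ⊕ Fin (j - 1))) ℤ :=
  Matrix.of fun r c =>
    match r, c with
    -- S_{j-1} : (S)_{p,q} = 1 iff q = p or q = p + 1
    | Sum.inl p, Sum.inl q =>
        if (q : ℕ) = (p : ℕ) ∨ (q : ℕ) = (p : ℕ) + 1 then 1 else 0
    -- Z_{j-1}
    | Sum.inl _, Sum.inr (Sum.inl _) => 0
    -- I_{j-1}
    | Sum.inl p, Sum.inr (Sum.inr q) => if (p : ℕ) = (q : ℕ) then 1 else 0
    -- L_{j-1} : (L)_{p,p+1} = 1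
    | Sum.inr (Sum.inl p), Sum.inl q => if (q : ℕ) = (p : ℕ) + 1 then 1 else 0
    -- T_{j-1} : all diagonal entries 1; superdiagonal 1
    | Sum.inr (Sum.inl p), Sum.inr (Sum.inl q) =>
        if (p : ℕ) = (q : ℕ) then 1
        else if (q : ℕ) = (p : ℕ) + 1 then 1 else 0
    -- Z_{j-1}
    | Sum.inr (Sum.inl _), Sum.inr (Sum.inr _) => 0
    -- H_j : only nonzero entry is the value j in the (1-based) position (j, j)
    | Sum.inr (Sum.inr p), Sum.inl q =>
        if (p : ℕ) = j - 1 ∧ (q : ℕ) = j - 1 then (j : ℤ) else 0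
    -- Y_j (zero)
    | Sum.inr (Sum.inr _), Sum.inr (Sum.inl _) => 0
    -- J_{j-1} : (J)_{p,p} = 1 for 1 ≤ p ≤ j - 1
    | Sum.inr (Sum.inr p), Sum.inr (Sum.inr q) =>
        if (p : ℕ) = (q : ℕ) then 1 else 0

set_option maxHeartbeats 1000000 in
/-- for every `j ≥ 2`, the block matrix `M_j` has rank `3j - 2`
over `ℚ`; equivalently, it is invertible as a matrix over `ℚ`. -/
theorem stmt16 (j : ℕ) (hj : 2 ≤ j) :
    ((oddBlockMatrix j).map ((↑) : ℤ → ℚ)).rank = 3 * j - 2 := by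
  set A := (oddBlockMatrix j).map ((↑) : ℤ → ℚ) with hAdef
  have hinj : Function.Injective A.mulVecLin := by
    rw [← LinearMap.ker_eq_bot, LinearMap.ker_eq_bot']
    intro v hv
    simp only [Matrix.mulVecLin_apply] at hv
    set x : Fin j → ℚ := fun q => v (Sum.inl q) with hxdef
    set y : Fin (j-1) → ℚ := fun q => v (Sum.inr (Sum.inl q)) with hydef
    set z : Fin (j-1) → ℚ := fun q => v (Sum.inr (Sum.inr q)) with hzdef
    have hrow : ∀ r, (∑ q : Fin j, A r (Sum.inl q) * x q)
        + ((∑ q : Fin (j-1), A r (Sum.inr (Sum.inl q)) * y q)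
          + (∑ q : Fin (j-1), A r (Sum.inr (Sum.inr q)) * z q)) = 0 := by
      intro r
      have := congrFun hv r
      simpa [Matrix.mulVec, dotProduct, Fintype.sum_sum_type] using this
    -- third block row: z = 0 and x_{j-1} = 0
    have e3 : ∀ p : Fin j,
        (if (p : ℕ) = j - 1 then (j:ℚ) else 0) * x ⟨j-1, by omega⟩
          + (if h : (p : ℕ) < j - 1 then z ⟨p, h⟩ else 0) = 0 := by
      intro p
      have h := hrow (Sum.inr (Sum.inr p))
      simp only [hAdef, Matrix.map_apply, oddBlockMatrix, Matrix.of_apply] at h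
      have h1 : (∑ q : Fin j,
          ((if (p : ℕ) = j - 1 ∧ (q : ℕ) = j - 1 then (j : ℤ) else 0 : ℤ) : ℚ) * x q)
          = (if (p : ℕ) = j - 1 then (j:ℚ) else 0) * x ⟨j-1, by omega⟩ := by
        by_cases hp : (p : ℕ) = j - 1
        · simp only [hp, true_and, if_true]
          rw [show (∑ q : Fin j, ((if (q : ℕ) = j - 1 then (j : ℤ) else 0 : ℤ) : ℚ) * x q)
              = (j:ℚ) * ∑ q : Fin j, (if (q : ℕ) = j - 1 then (1:ℚ) else 0) * x q by
            rw [Finset.mul_sum]; congr 1; funext q; split_ifs <;> simp]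
          rw [sum_ind, dif_pos (by omega)]
        · simp [hp]
      have h2 : (∑ q : Fin (j-1), ((if (p : ℕ) = (q : ℕ) then 1 else 0 : ℤ) : ℚ) * z q)
          = (if h : (p : ℕ) < j - 1 then z ⟨p, h⟩ else 0) := by
        rw [← sum_ind' z]; congr 1; funext q; split_ifs <;> simp
      rw [h1, h2] at h
      simpa using h
    have hz0 : ∀ q : Fin (j-1), z q = 0 := by
      intro q
      have hq := q.isLt
      have h := e3 ⟨q, by omega⟩
      rw [if_neg (show ¬((q:ℕ) = j - 1) by omega),
        dif_pos (show (q:ℕ) < j - 1 from hq)] at h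
      simpa using h
    have hxlast : x ⟨j-1, by omega⟩ = 0 := by
      have h := e3 ⟨j-1, by omega⟩
      rw [if_pos rfl, dif_neg (show ¬(j - 1 < j - 1) by omega)] at h
      have hj0 : (j:ℚ) ≠ 0 := by positivity
      have h' : (j:ℚ) * x ⟨j-1, by omega⟩ = 0 := by linarith
      rcases mul_eq_zero.mp h' with h'' | h''
      · exact absurd h'' hj0
      · exact h''
    -- first block row equations
    have e1 : ∀ p : Fin (j-1), x ⟨p, by omega⟩ + x ⟨(p:ℕ)+1, by omega⟩ + z p = 0 := by
      intro p
      have hp := p.isLt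
      have h := hrow (Sum.inl p)
      simp only [hAdef, Matrix.map_apply, oddBlockMatrix, Matrix.of_apply] at h
      have h1 : (∑ q : Fin j,
          ((if (q : ℕ) = (p : ℕ) ∨ (q : ℕ) = (p : ℕ) + 1 then 1 else 0 : ℤ) : ℚ) * x q)
          = x ⟨p, by omega⟩ + x ⟨(p:ℕ)+1, by omega⟩ := by
        have : ∀ q : Fin j,
            ((if (q : ℕ) = (p : ℕ) ∨ (q : ℕ) = (p : ℕ) + 1 then 1 else 0 : ℤ) : ℚ) * x q
            = (if (q : ℕ) = (p : ℕ) then (1:ℚ) else 0) * x q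
              + (if (q : ℕ) = (p : ℕ) + 1 then (1:ℚ) else 0) * x q := by
          intro q
          rw [← add_mul]; congr 1
          split_ifs <;> push_cast <;> first | ring1 | (exfalso; omega)
        rw [Finset.sum_congr rfl fun q _ => this q, Finset.sum_add_distrib,
          sum_ind, sum_ind, dif_pos (by omega), dif_pos (by omega)]
      have h2 : (∑ q : Fin (j-1), ((if (p : ℕ) = (q : ℕ) then 1 else 0 : ℤ) : ℚ) * z q)
          = z p := by
        rw [show (∑ q : Fin (j-1), ((if (p : ℕ) = (q : ℕ) then 1 else 0 : ℤ) : ℚ) * z q)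
            = ∑ q : Fin (j-1), (if (p:ℕ) = (q : ℕ) then (1:ℚ) else 0) * z q by
          congr 1; funext q; split_ifs <;> simp]
        rw [sum_ind', dif_pos hp]
      rw [h1, h2] at h
      simpa [add_assoc] using h
    -- second block row equations
    have e2 : ∀ p : Fin (j-1), x ⟨(p:ℕ)+1, by omega⟩ + (y p
        + (if h : (p:ℕ)+1 < j - 1 then y ⟨(p:ℕ)+1, h⟩ else 0)) = 0 := by
      intro p
      have hp := p.isLt
      have h := hrow (Sum.inr (Sum.inl p))
      simp only [hAdef, Matrix.map_apply, oddBlockMatrix, Matrix.of_apply] at h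
      have h1 : (∑ q : Fin j, ((if (q : ℕ) = (p : ℕ) + 1 then 1 else 0 : ℤ) : ℚ) * x q)
          = x ⟨(p:ℕ)+1, by omega⟩ := by
        rw [show (∑ q : Fin j, ((if (q : ℕ) = (p : ℕ) + 1 then 1 else 0 : ℤ) : ℚ) * x q)
            = ∑ q : Fin j, (if (q:ℕ) = (p : ℕ) + 1 then (1:ℚ) else 0) * x q by
          congr 1; funext q; split_ifs <;> simp]
        rw [sum_ind, dif_pos (by omega)]
      have h2 : (∑ q : Fin (j-1),
          ((if (p : ℕ) = (q : ℕ) then 1 else if (q : ℕ) = (p : ℕ) + 1 then 1 else 0 : ℤ) : ℚ) * y q)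
          = y p + (if h : (p:ℕ)+1 < j - 1 then y ⟨(p:ℕ)+1, h⟩ else 0) := by
        have : ∀ q : Fin (j-1),
            ((if (p : ℕ) = (q : ℕ) then 1 else if (q : ℕ) = (p : ℕ) + 1 then 1 else 0 : ℤ) : ℚ) * y q
            = (if (p:ℕ) = (q : ℕ) then (1:ℚ) else 0) * y q
              + (if (q : ℕ) = (p : ℕ) + 1 then (1:ℚ) else 0) * y q := by
          intro q
          rw [← add_mul]; congr 1
          split_ifs <;> push_cast <;> first | ring1 | (exfalso; omega)
        rw [Finset.sum_congr rfl fun q _ => this q, Finset.sum_add_distrib,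
          sum_ind', sum_ind, dif_pos hp, Fin.eta]
      rw [h1, h2] at h
      simpa using h
    -- x = 0
    have hx0 : ∀ m, m ≤ j - 1 → x ⟨j-1-m, by omega⟩ = 0 := by
      intro m
      induction m with
      | zero =>
        intro _
        rw [show (⟨j-1-0, by omega⟩ : Fin j) = ⟨j-1, by omega⟩ from Fin.ext rfl]
        exact hxlast
      | succ m ih =>
        intro hm
        have h := e1 ⟨j-1-(m+1), by omega⟩
        have hxm : x ⟨j-1-m, by omega⟩ = 0 := ih (by omega)
        have hidx : (⟨(j-1-(m+1))+1, by omega⟩ : Fin j) = ⟨j-1-m, by omega⟩ :=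
          Fin.ext (show j-1-(m+1)+1 = j-1-m by omega)
        rw [hidx, hxm, hz0] at h
        simpa using h
    have hxall : ∀ i : Fin j, x i = 0 := by
      intro i
      have hi := i.isLt
      have := hx0 (j-1-(i:ℕ)) (by omega)
      rwa [show (⟨j-1-(j-1-(i:ℕ)), by omega⟩ : Fin j) = i from
        Fin.ext (show j-1-(j-1-(i:ℕ)) = (i:ℕ) by omega)] at this
    -- y = 0
    have hy0 : ∀ m, m ≤ j - 2 → y ⟨j-2-m, by omega⟩ = 0 := by
      intro m
      induction m with
      | zero =>
        intro _
        have h := e2 ⟨j-2, by omega⟩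
        rw [hxall, dif_neg (show ¬(j - 2 + 1 < j - 1) by omega)] at h
        simpa using h
      | succ m ih =>
        intro hm
        have h := e2 ⟨j-2-(m+1), by omega⟩
        have hym : y ⟨j-2-m, by omega⟩ = 0 := ih (by omega)
        rw [hxall, dif_pos (show j-2-(m+1) + 1 < j - 1 by omega)] at h
        have hidx : (⟨(j-2-(m+1))+1, show j-2-(m+1)+1 < j-1 by omega⟩ : Fin (j-1))
            = ⟨j-2-m, by omega⟩ := Fin.ext (show j-2-(m+1)+1 = j-2-m by omega)
        rw [hidx, hym] at h
        simpa using h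
    have hyall : ∀ q : Fin (j-1), y q = 0 := by
      intro q
      have hq := q.isLt
      have := hy0 (j-2-(q:ℕ)) (by omega)
      rwa [show (⟨j-2-(j-2-(q:ℕ)), by omega⟩ : Fin (j-1)) = q from
        Fin.ext (show j-2-(j-2-(q:ℕ)) = (q:ℕ) by omega)] at this
    funext c
    rcases c with q | q | q
    · exact hxall q
    · exact hyall q
    · exact hz0 q
  rw [Matrix.rank, LinearMap.finrank_range_of_inj hinj,
    Module.finrank_fintype_fun_eq_card]
  simp only [Fintype.card_sum, Fintype.card_fin]
  omega
end
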